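/- arXiv:1406.3702 — 5 statements merged into one kernel-verified Lean document; each statement's English description precedes it below -/
import Mathlib

section
/- For every z ∈ ℂ ∖ ℝ, the Weyl–Titchmarsh function satisfies the partial fraction expansion M(z)/z = Σ_{λ∈σ} 1/( λ γ_λ² (λ − z) ), where σ is the set of roots of W (all real and simple) and, for λ ∈ σ, γ_λ² = Σ_n ω_n φ₊(λ,x_n)² + 2λ Σ_n υ_n φ₊(λ,x_n)². -/
open scoped BigOperators

/-- Transfer matrix across an interval of length `d` for `-f'' + (1/4) f = 0`. -/
noncomputable def Tmat (d : ℝ) : Matrix (Fin 2) (Fin 2) ℂ :=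
  !![Complex.cosh ((d : ℂ) / 2), 2 * Complex.sinh ((d : ℂ) / 2);
     (1 / 2) * Complex.sinh ((d : ℂ) / 2), Complex.cosh ((d : ℂ) / 2)]

/-- Interface matrix at a point carrying weight `w` and dipole `v`. -/
noncomputable def Omat (w v : ℝ) (z : ℂ) : Matrix (Fin 2) (Fin 2) ℂ :=
  !![1, 0; -(z * (w : ℂ) + z ^ 2 * (v : ℂ)), 1]

/-- The value `(φ₋(z, x_N+), φ₋'(z, x_N+))` obtained by propagating the initial data
`(e^{x_0/2}, (1/2) e^{x_0/2})` through all the point interactions (0-indexed data). -/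
noncomputable def transVec (N : ℕ) (x w v : ℕ → ℝ) (z : ℂ) : Fin 2 → ℂ :=
  Matrix.mulVec
    ((((List.range (N - 1)).reverse.map
        (fun j => Omat (w (j + 1)) (v (j + 1)) z * Tmat (x (j + 1) - x j))).prod)
      * Omat (w 0) (v 0) z)
    ![Complex.exp ((x 0 : ℂ) / 2), (1 / 2) * Complex.exp ((x 0 : ℂ) / 2)]

/-- The Wronskian polynomial `W(z)` of the generalized spectral problem
`-f'' + (1/4) f = z ω f + z² υ f` (`W ≡ 1` when `N = 0`). -/
noncomputable def Wron (N : ℕ) (x w v : ℕ → ℝ) (z : ℂ) : ℂ :=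
  if N = 0 then 1
  else Complex.exp (-(x (N - 1) : ℂ) / 2) *
    (transVec N x w v z 1 + (1 / 2) * transVec N x w v z 0)

/-- The Weyl--Titchmarsh function `M(z)`. -/
noncomputable def WeylM (N : ℕ) (x w v : ℕ → ℝ) (z : ℂ) : ℂ :=
  Complex.exp ((x (N - 1) : ℂ) / 2) *
    ((1 / 2) * transVec N x w v z 0 - transVec N x w v z 1) / Wron N x w v z

/-- `f` (with distributional derivative represented by `f'`) is a solution at `z` of the
generalized spectral problem `-f'' + (1/4) f = z ω f + z² υ f` with
`ω = Σ_{n<N} w n δ_{x n}`, `υ = Σ_{n<N} v n δ_{x n}`: it is continuous, twice differentiable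
away from the points `x n` with `f'' = (1/4) f` there, and the one-sided limits of `f'` at
each `x n` exist and satisfy the jump condition
`f'(x_n+) - f'(x_n-) = -(z w_n + z² v_n) f (x_n)`. -/
def IsSol (N : ℕ) (x w v : ℕ → ℝ) (z : ℂ) (f f' : ℝ → ℂ) : Prop :=
  Continuous f ∧
  (∀ t : ℝ, (∀ n < N, t ≠ x n) →
    HasDerivAt f (f' t) t ∧ HasDerivAt f' ((1 / 4) * f t) t) ∧
  (∀ n < N, ∃ L R : ℂ,
    Filter.Tendsto f' (nhdsWithin (x n) (Set.Iio (x n))) (nhds L) ∧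
    Filter.Tendsto f' (nhdsWithin (x n) (Set.Ioi (x n))) (nhds R) ∧
    R - L = -(z * (w n : ℂ) + z ^ 2 * (v n : ℂ)) * f (x n))



open scoped BigOperators
open Polynomial

noncomputable section
namespace CHaux

/-- real transfer step -/
def toR (d : ℝ) (p : ℝ × ℝ) : ℝ × ℝ :=
  (Real.cosh (d/2) * p.1 + 2 * Real.sinh (d/2) * p.2,
   (1/2) * Real.sinh (d/2) * p.1 + Real.cosh (d/2) * p.2)

/-- real jump step -/
def joR (q : ℝ) (p : ℝ × ℝ) : ℝ × ℝ := (p.1, p.2 - q * p.1)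

/-- pre-jump data of the left solution at `x n`, real version at spectral parameter `lam` -/
def yR (x w v : ℕ → ℝ) (lam : ℝ) : ℕ → ℝ × ℝ
  | 0 => (Real.exp (x 0 / 2), (1/2) * Real.exp (x 0 / 2))
  | n+1 => toR (x (n+1) - x n) (joR (lam * w n + lam^2 * v n) (yR x w v lam n))

/-- post-jump data at `x n` -/
def uR (x w v : ℕ → ℝ) (lam : ℝ) (n : ℕ) : ℝ × ℝ :=
  joR (lam * w n + lam^2 * v n) (yR x w v lam n)

/-- polynomial transfer step -/
def toP (d : ℝ) (p : ℂ[X] × ℂ[X]) : ℂ[X] × ℂ[X] :=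
  (C (Real.cosh (d/2) : ℂ) * p.1 + C (2 * Real.sinh (d/2) : ℂ) * p.2,
   C ((1/2) * Real.sinh (d/2) : ℂ) * p.1 + C (Real.cosh (d/2) : ℂ) * p.2)

def qP (a b : ℝ) : ℂ[X] := C (a:ℂ) * X + C (b:ℂ) * X^2

def joP (a b : ℝ) (p : ℂ[X] × ℂ[X]) : ℂ[X] × ℂ[X] := (p.1, p.2 - qP a b * p.1)

def yP (x w v : ℕ → ℝ) : ℕ → ℂ[X] × ℂ[X]
  | 0 => ((C (Real.exp (x 0 / 2) : ℂ)), C ((1/2) * Real.exp (x 0 / 2) : ℂ))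
  | n+1 => toP (x (n+1) - x n) (joP (w n) (v n) (yP x w v n))

def uP (x w v : ℕ → ℝ) (n : ℕ) : ℂ[X] × ℂ[X] :=
  joP (w n) (v n) (yP x w v n)

/-- evaluation at a real point gives the real chain -/
theorem yP_eval (x w v : ℕ → ℝ) (lam : ℝ) (k : ℕ) :
    eval (lam:ℂ) (yP x w v k).1 = ((yR x w v lam k).1 : ℂ) ∧
    eval (lam:ℂ) (yP x w v k).2 = ((yR x w v lam k).2 : ℂ) := by
  induction k with
  | zero => simp [yP, yR]
  | succ n ih =>
    obtain ⟨h1, h2⟩ := ih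
    simp only [yP, yR, toP, toR, joP, joR, qP, eval_add, eval_mul, eval_sub, eval_C, eval_X,
      eval_pow, h1, h2]
    constructor <;> push_cast <;> ring

theorem uP_eval (x w v : ℕ → ℝ) (lam : ℝ) (n : ℕ) :
    eval (lam:ℂ) (uP x w v n).1 = ((uR x w v lam n).1 : ℂ) ∧
    eval (lam:ℂ) (uP x w v n).2 = ((uR x w v lam n).2 : ℂ) := by
  obtain ⟨h1, h2⟩ := yP_eval x w v lam n
  simp only [uP, uR, joP, joR, qP, eval_sub, eval_mul, eval_add, eval_C, eval_X, eval_pow, h1, h2]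
  constructor
  · push_cast; try rfl
  · push_cast; ring

theorem mulVec2 (a b c d p q : ℂ) :
    Matrix.mulVec (!![a,b;c,d]) ![p,q] = ![a*p+b*q, c*p+d*q] := by
  funext i
  fin_cases i <;> simp [Matrix.mulVec, dotProduct, Fin.sum_univ_two]

theorem cosh_cast (d : ℝ) : ((Real.cosh (d/2) : ℝ) : ℂ) = Complex.cosh ((d:ℂ)/2) := by
  rw [Complex.ofReal_cosh]; norm_cast

theorem sinh_cast (d : ℝ) : ((Real.sinh (d/2) : ℝ) : ℂ) = Complex.sinh ((d:ℂ)/2) := by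
  rw [Complex.ofReal_sinh]; norm_cast

theorem exp_cast (t : ℝ) : ((Real.exp (t/2) : ℝ) : ℂ) = Complex.exp ((t:ℂ)/2) := by
  rw [Complex.ofReal_exp]; norm_cast

theorem chain_eval (x w v : ℕ → ℝ) (z : ℂ) (k : ℕ) :
    Matrix.mulVec
      ((((List.range k).reverse.map
          (fun j => Omat (w (j + 1)) (v (j + 1)) z * Tmat (x (j + 1) - x j))).prod)
        * Omat (w 0) (v 0) z)
      ![Complex.exp ((x 0 : ℂ) / 2), (1 / 2) * Complex.exp ((x 0 : ℂ) / 2)]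
    = ![eval z (uP x w v k).1, eval z (uP x w v k).2] := by
  induction k with
  | zero =>
    simp only [List.range_zero, List.reverse_nil, List.map_nil, List.prod_nil, one_mul]
    rw [Omat, mulVec2]
    simp only [uP, yP, joP, qP, eval_sub, eval_mul, eval_add, eval_C, eval_X, eval_pow,
      ← exp_cast]
    funext i
    fin_cases i <;> simp <;> ring
  | succ n ih =>
    rw [List.range_succ, List.reverse_append, List.map_append, List.prod_append,
      List.reverse_singleton, List.map_singleton, List.prod_singleton, mul_assoc,
      ← Matrix.mulVec_mulVec, ← Matrix.mulVec_mulVec, ih]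
    have hu : (uP x w v (n+1)) = joP (w (n+1)) (v (n+1)) (toP (x (n+1) - x n) (uP x w v n)) := by
      simp only [uP, yP]
    rw [hu, Tmat, Omat, mulVec2, mulVec2]
    simp only [joP, toP, qP, eval_sub, eval_mul, eval_add, eval_C, eval_X, eval_pow,
      ← cosh_cast, ← sinh_cast]
    funext i
    fin_cases i <;> simp <;> push_cast <;> ring

theorem transVec_eval (N : ℕ) (x w v : ℕ → ℝ) (z : ℂ) :
    transVec N x w v z 0 = eval z (uP x w v (N-1)).1 ∧
    transVec N x w v z 1 = eval z (uP x w v (N-1)).2 := by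
  unfold transVec
  rw [chain_eval]
  exact ⟨by simp, by simp⟩

/-- the Wronskian polynomial -/
def WPol (N : ℕ) (x w v : ℕ → ℝ) : ℂ[X] :=
  C (Complex.exp (-(x (N-1) : ℂ)/2)) * ((uP x w v (N-1)).2 + C (1/2) * (uP x w v (N-1)).1)

/-- the numerator polynomial of M -/
def PPol (N : ℕ) (x w v : ℕ → ℝ) : ℂ[X] :=
  C (Complex.exp ((x (N-1) : ℂ)/2)) * (C (1/2) * (uP x w v (N-1)).1 - (uP x w v (N-1)).2)

theorem Wron_eval (N : ℕ) (hN : 1 ≤ N) (x w v : ℕ → ℝ) (z : ℂ) :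
    Wron N x w v z = eval z (WPol N x w v) := by
  obtain ⟨h0, h1⟩ := transVec_eval N x w v z
  rw [Wron, if_neg (by omega), WPol, h0, h1]
  simp only [eval_mul, eval_add, eval_C]

theorem WeylM_eval (N : ℕ) (hN : 1 ≤ N) (x w v : ℕ → ℝ) (z : ℂ) :
    WeylM N x w v z = eval z (PPol N x w v) / eval z (WPol N x w v) := by
  obtain ⟨h0, h1⟩ := transVec_eval N x w v z
  rw [WeylM, ← Wron_eval N hN, PPol, h0, h1]
  simp only [eval_mul, eval_sub, eval_C]


/-! ### scalar complex chain -/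

def toC (d : ℝ) (p : ℂ × ℂ) : ℂ × ℂ :=
  ((Real.cosh (d/2) : ℂ) * p.1 + 2 * (Real.sinh (d/2) : ℂ) * p.2,
   (1/2) * (Real.sinh (d/2) : ℂ) * p.1 + (Real.cosh (d/2) : ℂ) * p.2)

def joC (q : ℂ) (p : ℂ × ℂ) : ℂ × ℂ := (p.1, p.2 - q * p.1)

def yCh (x w v : ℕ → ℝ) (z : ℂ) : ℕ → ℂ × ℂ
  | 0 => ((Real.exp (x 0 / 2) : ℂ), (1/2) * (Real.exp (x 0 / 2) : ℂ))
  | n+1 => toC (x (n+1) - x n) (joC (z * w n + z^2 * v n) (yCh x w v z n))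

def uCh (x w v : ℕ → ℝ) (z : ℂ) (n : ℕ) : ℂ × ℂ :=
  joC (z * w n + z^2 * v n) (yCh x w v z n)

theorem yP_evalC (x w v : ℕ → ℝ) (z : ℂ) (k : ℕ) :
    eval z (yP x w v k).1 = (yCh x w v z k).1 ∧
    eval z (yP x w v k).2 = (yCh x w v z k).2 := by
  induction k with
  | zero => simp [yP, yCh]
  | succ n ih =>
    obtain ⟨h1, h2⟩ := ih
    simp only [yP, yCh, toP, toC, joP, joC, qP, eval_add, eval_mul, eval_sub, eval_C, eval_X,
      eval_pow, h1, h2]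
    constructor <;> push_cast <;> ring

theorem uP_evalC (x w v : ℕ → ℝ) (z : ℂ) (n : ℕ) :
    eval z (uP x w v n).1 = (uCh x w v z n).1 ∧
    eval z (uP x w v n).2 = (uCh x w v z n).2 := by
  obtain ⟨h1, h2⟩ := yP_evalC x w v z n
  simp only [uP, uCh, joP, joC, qP, eval_sub, eval_mul, eval_add, eval_C, eval_X, eval_pow, h1, h2]
  constructor
  · trivial
  · push_cast; ring

theorem yCh_real (x w v : ℕ → ℝ) (lam : ℝ) (k : ℕ) :
    (yCh x w v (lam:ℂ) k).1 = ((yR x w v lam k).1 : ℂ) ∧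
    (yCh x w v (lam:ℂ) k).2 = ((yR x w v lam k).2 : ℂ) := by
  obtain ⟨a1, a2⟩ := yP_evalC x w v (lam:ℂ) k
  obtain ⟨b1, b2⟩ := yP_eval x w v lam k
  exact ⟨a1 ▸ b1, a2 ▸ b2⟩

theorem uCh_real (x w v : ℕ → ℝ) (lam : ℝ) (k : ℕ) :
    (uCh x w v (lam:ℂ) k).1 = ((uR x w v lam k).1 : ℂ) ∧
    (uCh x w v (lam:ℂ) k).2 = ((uR x w v lam k).2 : ℂ) := by
  obtain ⟨a1, a2⟩ := uP_evalC x w v (lam:ℂ) k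
  obtain ⟨b1, b2⟩ := uP_eval x w v lam k
  exact ⟨a1 ▸ b1, a2 ▸ b2⟩

theorem coshsq (d : ℝ) : ((Real.cosh (d/2) : ℝ) : ℂ)^2 - ((Real.sinh (d/2) : ℝ) : ℂ)^2 = 1 := by
  rw [← Complex.ofReal_pow, ← Complex.ofReal_pow, ← Complex.ofReal_sub,
    Real.cosh_sq_sub_sinh_sq, Complex.ofReal_one]

/-- the fundamental telescoping identity for the Wronskian of two chains -/
theorem teleC (x w v : ℕ → ℝ) (ζ z : ℂ) (k : ℕ) :
    (uCh x w v ζ k).1 * (uCh x w v z k).2 - (uCh x w v ζ k).2 * (uCh x w v z k).1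
    = ∑ n ∈ Finset.range (k+1),
        ((ζ * w n + ζ^2 * v n) - (z * w n + z^2 * v n)) *
          (yCh x w v ζ n).1 * (yCh x w v z n).1 := by
  induction k with
  | zero =>
    rw [Finset.sum_range_one]
    simp only [uCh, joC, yCh]
    ring
  | succ m ih =>
    rw [Finset.sum_range_succ, ← ih]
    have hcs := coshsq (x (m+1) - x m)
    simp only [uCh, joC, yCh, toC]
    set c := ((Real.cosh ((x (m+1) - x m)/2) : ℝ) : ℂ)
    set s := ((Real.sinh ((x (m+1) - x m)/2) : ℝ) : ℂ)
    set a := (yCh x w v ζ m)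
    set b := (yCh x w v z m)
    linear_combination ((a.1 * (b.2 - (z * w m + z^2 * v m) * b.1)
      - (a.2 - (ζ * w m + ζ^2 * v m) * a.1) * b.1)) * hcs

/-! ### real-chain positivity at an eigenvalue -/

theorem gapR (d : ℝ) (hd : 0 ≤ d) (p : ℝ × ℝ) :
    p.1 * p.2 ≤ (toR d p).1 * (toR d p).2 := by
  have hc := Real.cosh_sq_sub_sinh_sq (d/2)
  have hs : 0 ≤ Real.sinh (d/2) := Real.sinh_nonneg_iff.2 (by linarith)
  have hcs : 0 ≤ Real.cosh (d/2) - Real.sinh (d/2) := by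
    rw [Real.cosh_sub_sinh]; positivity
  have expand : (toR d p).1 * (toR d p).2 - p.1 * p.2
      = (Real.sinh (d/2)/2) * (Real.sinh (d/2)*(p.1+2*p.2)^2
        + (Real.cosh (d/2) - Real.sinh (d/2))*(p.1^2+4*p.2^2)) := by
    simp only [toR]
    linear_combination p.1 * p.2 * hc
  nlinarith [mul_nonneg hs (sq_nonneg (p.1+2*p.2)), mul_nonneg hcs (by positivity : (0:ℝ) ≤ p.1^2+4*p.2^2)]

theorem key_pos (N : ℕ) (hN : 1 ≤ N) (x w v : ℕ → ℝ)
    (hx : ∀ i j, i < j → j < N → x i < x j) (lam : ℝ)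
    (heig : (uR x w v lam (N-1)).2 = -(1/2) * (uR x w v lam (N-1)).1) :
    0 < lam * ∑ n ∈ Finset.range N, (w n + lam * v n) * (yR x w v lam n).1^2 := by
  obtain ⟨M, rfl⟩ : ∃ M, N = M + 1 := ⟨N - 1, by omega⟩
  have jump : ∀ n, lam * ((w n + lam * v n) * (yR x w v lam n).1^2)
      = (yR x w v lam n).1 * (yR x w v lam n).2 - (uR x w v lam n).1 * (uR x w v lam n).2 := by
    intro n; simp only [uR, joR]; ring
  rw [Finset.mul_sum]
  simp only [jump]
  rw [Finset.sum_sub_distrib, Finset.sum_range_succ' (fun n => (yR x w v lam n).1 * (yR x w v lam n).2) M,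
    Finset.sum_range_succ]
  have hy0 : (yR x w v lam 0).1 * (yR x w v lam 0).2 = (1/2) * Real.exp (x 0 / 2)^2 := by
    simp only [yR]; ring
  have hlast : (uR x w v lam M).1 * (uR x w v lam M).2 = -(1/2) * (uR x w v lam M).1^2 := by
    have : M + 1 - 1 = M := by omega
    rw [this] at heig
    rw [heig]; ring
  have hgaps : ∀ n ∈ Finset.range M,
      (uR x w v lam n).1 * (uR x w v lam n).2 ≤ (yR x w v lam (n+1)).1 * (yR x w v lam (n+1)).2 := by
    intro n hn
    have hd : 0 ≤ x (n+1) - x n := by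
      have := hx n (n+1) (by omega) (by simp at hn; omega)
      linarith
    have : yR x w v lam (n+1) = toR (x (n+1) - x n) (uR x w v lam n) := by
      simp only [yR, uR]
    rw [this]
    exact gapR _ hd _
  have hsum : ∑ n ∈ Finset.range M, (uR x w v lam n).1 * (uR x w v lam n).2
      ≤ ∑ n ∈ Finset.range M, (yR x w v lam (n+1)).1 * (yR x w v lam (n+1)).2 :=
    Finset.sum_le_sum hgaps
  have he : 0 < Real.exp (x 0 / 2)^2 := by positivity
  nlinarith [sq_nonneg (uR x w v lam M).1]

theorem gam_pos (N : ℕ) (hN : 1 ≤ N) (x w v : ℕ → ℝ)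
    (hx : ∀ i j, i < j → j < N → x i < x j) (hv : ∀ n, n < N → 0 ≤ v n) (lam : ℝ)
    (heig : (uR x w v lam (N-1)).2 = -(1/2) * (uR x w v lam (N-1)).1) :
    0 < lam * ∑ n ∈ Finset.range N, (w n + 2 * lam * v n) * (yR x w v lam n).1^2 := by
  have h1 := key_pos N hN x w v hx lam heig
  have split : lam * ∑ n ∈ Finset.range N, (w n + 2 * lam * v n) * (yR x w v lam n).1^2
      = lam * ∑ n ∈ Finset.range N, (w n + lam * v n) * (yR x w v lam n).1^2
        + lam^2 * ∑ n ∈ Finset.range N, v n * (yR x w v lam n).1^2 := by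
    rw [Finset.mul_sum, Finset.mul_sum, Finset.mul_sum, ← Finset.sum_add_distrib]
    congr 1; funext n; ring
  have h2 : 0 ≤ lam^2 * ∑ n ∈ Finset.range N, v n * (yR x w v lam n).1^2 := by
    apply mul_nonneg (sq_nonneg _)
    apply Finset.sum_nonneg
    intro n hn
    exact mul_nonneg (hv n (Finset.mem_range.1 hn)) (sq_nonneg _)
  linarith [split, h1, h2]

theorem lam_ne_zero (N : ℕ) (hN : 1 ≤ N) (x w v : ℕ → ℝ)
    (hx : ∀ i j, i < j → j < N → x i < x j) (lam : ℝ)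
    (heig : (uR x w v lam (N-1)).2 = -(1/2) * (uR x w v lam (N-1)).1) :
    lam ≠ 0 := by
  intro h
  have := key_pos N hN x w v hx lam heig
  rw [h] at this
  simp at this

/-! ### nonvanishing of the chain -/

theorem uR_ne (x w v : ℕ → ℝ) (lam : ℝ) (k : ℕ) :
    ¬((uR x w v lam k).1 = 0 ∧ (uR x w v lam k).2 = 0) := by
  have main : ∀ n, ¬((yR x w v lam n).1 = 0 ∧ (yR x w v lam n).2 = 0) := by
    intro n
    induction n with
    | zero =>
      simp only [yR]
      intro ⟨h1, _⟩
      exact (Real.exp_pos _).ne' h1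
    | succ m ih =>
      simp only [yR, toR, joR]
      set c := Real.cosh ((x (m+1) - x m)/2)
      set s := Real.sinh ((x (m+1) - x m)/2)
      have hc := Real.cosh_sq_sub_sinh_sq ((x (m+1) - x m)/2)
      set p1 := (yR x w v lam m).1
      set p2 := (yR x w v lam m).2
      intro ⟨h1, h2⟩
      apply ih
      have e1 : p1 = 0 := by linear_combination c * h1 - 2 * s * h2 - p1 * hc
      have e2 : p2 - (lam * w m + lam^2 * v m) * p1 = 0 := by
        linear_combination c * h2 - (s/2) * h1 - (p2 - (lam * w m + lam^2 * v m) * p1) * hc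
      constructor
      · exact e1
      · rw [e1] at e2; linarith [e2]
  intro ⟨h1, h2⟩
  apply main k
  simp only [uR, joR] at h1 h2 ⊢
  refine ⟨h1, ?_⟩
  rw [h1] at h2
  linarith [h2]



/-! ### eigenvalue relations and factorization -/

theorem eigenRel (N : ℕ) (hN : 1 ≤ N) (x w v : ℕ → ℝ) (lam : ℝ)
    (h0 : Wron N x w v (lam:ℂ) = 0) :
    (uR x w v lam (N-1)).2 = -(1/2) * (uR x w v lam (N-1)).1 := by
  rw [Wron_eval N hN] at h0
  rw [WPol] at h0
  obtain ⟨e1, e2⟩ := uP_eval x w v lam (N-1)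
  rw [eval_mul, eval_add, eval_mul, eval_C, eval_C, e1, e2] at h0
  have hexp : Complex.exp (-(x (N-1) : ℂ)/2) ≠ 0 := Complex.exp_ne_zero _
  rcases mul_eq_zero.1 h0 with h | h
  · exact absurd h hexp
  · have h2 : (((uR x w v lam (N-1)).2 + (1/2) * (uR x w v lam (N-1)).1 : ℝ) : ℂ) = 0 := by
      push_cast
      linear_combination h
    rw [Complex.ofReal_eq_zero] at h2
    linarith

theorem u1_ne (N : ℕ) (hN : 1 ≤ N) (x w v : ℕ → ℝ) (lam : ℝ)
    (heig : (uR x w v lam (N-1)).2 = -(1/2) * (uR x w v lam (N-1)).1) :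
    (uR x w v lam (N-1)).1 ≠ 0 := by
  intro h
  exact uR_ne x w v lam (N-1) ⟨h, by rw [heig, h]; ring⟩

/-- the residue-side polynomial -/
def SPol (N : ℕ) (x w v : ℕ → ℝ) (lam : ℝ) : ℂ[X] :=
  C ((Real.exp (-x (N-1)/2) / (uR x w v lam (N-1)).1 : ℝ) : ℂ) *
    ∑ n ∈ Finset.range N,
      (C (w n : ℂ) + (C (lam:ℂ) + X) * C (v n : ℂ)) * C (((yR x w v lam n).1 : ℝ) : ℂ)
        * (yP x w v n).1

theorem WPol_factor (N : ℕ) (hN : 1 ≤ N) (x w v : ℕ → ℝ) (lam : ℝ)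
    (heig : (uR x w v lam (N-1)).2 = -(1/2) * (uR x w v lam (N-1)).1) :
    WPol N x w v = (C (lam:ℂ) - X) * SPol N x w v lam := by
  have hu1 : (uR x w v lam (N-1)).1 ≠ 0 := u1_ne N hN x w v lam heig
  apply Polynomial.funext
  intro z
  have tel := teleC x w v (lam:ℂ) z (N-1)
  obtain ⟨e1, e2⟩ := uP_evalC x w v z (N-1)
  obtain ⟨r1, r2⟩ := uCh_real x w v lam (N-1)
  rw [WPol, SPol]
  rw [eval_mul, eval_mul, eval_sub, eval_C, eval_X, eval_mul, eval_C, eval_add, eval_mul,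
    eval_C, eval_C, e1, e2, eval_finset_sum]
  have hsum : ∀ n ∈ Finset.range N,
      eval z ((C (w n : ℂ) + (C (lam:ℂ) + X) * C (v n : ℂ)) * C (((yR x w v lam n).1 : ℝ) : ℂ)
        * (yP x w v n).1)
      = ((w n : ℂ) + ((lam:ℂ) + z) * (v n : ℂ)) * (((yR x w v lam n).1 : ℝ) : ℂ)
        * (yCh x w v z n).1 := by
    intro n _
    rw [eval_mul, eval_mul, eval_add, eval_C, eval_mul, eval_add, eval_C, eval_X, eval_C, eval_C,
      (yP_evalC x w v z n).1]
  rw [Finset.sum_congr rfl hsum]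
  -- rewrite tel's sum and LHS
  have tsum : ∀ n ∈ Finset.range ((N-1)+1),
      (((lam:ℂ) * w n + (lam:ℂ)^2 * v n) - (z * w n + z^2 * v n)) *
        (yCh x w v (lam:ℂ) n).1 * (yCh x w v z n).1
      = ((lam:ℂ) - z) * (((w n : ℂ) + ((lam:ℂ) + z) * (v n : ℂ)) * (((yR x w v lam n).1 : ℝ) : ℂ)
          * (yCh x w v z n).1) := by
    intro n _
    rw [(yCh_real x w v lam n).1]
    ring
  rw [Finset.sum_congr rfl tsum, ← Finset.mul_sum] at tel
  have hNN : (N-1)+1 = N := by omega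
  rw [hNN] at tel
  rw [r1, r2] at tel
  have hee : Complex.exp (-(x (N-1) : ℂ)/2) = ((Real.exp (-x (N-1)/2) : ℝ) : ℂ) := by
    rw [Complex.ofReal_exp]; push_cast; ring_nf
  rw [heig] at tel
  push_cast at tel
  set S := ∑ n ∈ Finset.range N, (((w n : ℂ) + ((lam:ℂ) + z) * (v n : ℂ)) *
    (((yR x w v lam n).1 : ℝ) : ℂ) * (yCh x w v z n).1)
  have hu1c : ((uR x w v lam (N-1)).1 : ℂ) ≠ 0 := by exact_mod_cast hu1
  rw [hee, Complex.ofReal_div]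
  have hinv : ((uR x w v lam (N-1)).1 : ℂ)⁻¹ * ((uR x w v lam (N-1)).1 : ℂ) = 1 :=
    inv_mul_cancel₀ hu1c
  linear_combination (((Real.exp (-x (N-1)/2) : ℝ) : ℂ) / ((uR x w v lam (N-1)).1 : ℂ)) * tel
    - ((Real.exp (-x (N-1)/2) : ℝ) : ℂ)
      * ((uCh x w v z (N-1)).2 + (1/2) * (uCh x w v z (N-1)).1) * hinv

theorem SPol_eval_self (N : ℕ) (hN : 1 ≤ N) (x w v : ℕ → ℝ) (lam : ℝ) :
    eval (lam:ℂ) (SPol N x w v lam)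
      = ((Real.exp (-x (N-1)/2) / (uR x w v lam (N-1)).1 : ℝ) : ℂ) *
        ((∑ n ∈ Finset.range N, (w n + 2*lam*v n) * (yR x w v lam n).1^2 : ℝ) : ℂ) := by
  rw [SPol, eval_mul, eval_C, eval_finset_sum]
  congr 1
  rw [Complex.ofReal_sum]
  apply Finset.sum_congr rfl
  intro n _
  rw [eval_mul, eval_mul, eval_add, eval_C, eval_mul, eval_add, eval_C, eval_X, eval_C, eval_C,
    (yP_eval x w v lam n).1]
  push_cast
  ring

/-! ### degree bounds -/

theorem qP_deg (a b : ℝ) (h : 0 < |a| + b) (hb : 0 ≤ b) : 1 ≤ (qP a b).natDegree := by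
  rcases eq_or_ne b 0 with hb0 | hb0
  · have ha : (a:ℂ) ≠ 0 := by
      simp only [ne_eq, Complex.ofReal_eq_zero]
      intro h0
      rw [h0, hb0] at h; simp at h
    apply le_natDegree_of_ne_zero (n := 1)
    simp [qP, coeff_add, coeff_C_mul, coeff_X, coeff_X_pow, ha]
  · have hbC : (b:ℂ) ≠ 0 := by simpa using hb0
    have h2 : (2:ℕ) ≤ (qP a b).natDegree := by
      apply le_natDegree_of_ne_zero (n := 2)
      simp [qP, coeff_add, coeff_C_mul, coeff_X, coeff_X_pow, hbC]
    omega

theorem qP_ne (a b : ℝ) (h : 0 < |a| + b) (hb : 0 ≤ b) : qP a b ≠ 0 := by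
  intro h0
  have := qP_deg a b h hb
  rw [h0] at this
  simp at this

theorem deg_lt (N : ℕ) (x w v : ℕ → ℝ)
    (hx : ∀ i j, i < j → j < N → x i < x j)
    (hv : ∀ n, n < N → 0 ≤ v n) (hnd : ∀ n, n < N → 0 < |w n| + v n) :
    ∀ k, k < N → (uP x w v k).1.natDegree < (uP x w v k).2.natDegree := by
  intro k
  induction k with
  | zero =>
    intro h0
    have he : (Real.exp (x 0 / 2) : ℂ) ≠ 0 := by
      simpa using (Real.exp_pos (x 0 / 2)).ne'
    have hq := qP_deg (w 0) (v 0) (hnd 0 h0) (hv 0 h0)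
    have hqne := qP_ne (w 0) (v 0) (hnd 0 h0) (hv 0 h0)
    simp only [uP, yP, joP]
    have h1 : (C (Real.exp (x 0 / 2) : ℂ)).natDegree = 0 := natDegree_C _
    rw [h1]
    have hco : (C ((1/2) * Real.exp (x 0 / 2) : ℝ) : ℂ[X]).natDegree = 0 := natDegree_C _
    -- coefficient of the second component at natDegree qP is nonzero
    apply lt_of_lt_of_le (show 0 < (qP (w 0) (v 0)).natDegree from hq)
    apply le_natDegree_of_ne_zero (n := (qP (w 0) (v 0)).natDegree)
    rw [coeff_sub, coeff_mul_C, coeff_C, if_neg (by omega), coeff_natDegree, zero_sub,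
      neg_ne_zero]
    exact mul_ne_zero (leadingCoeff_ne_zero.2 hqne) he
  | succ m ih =>
    intro hm
    have hmN : m < N := by omega
    have ihm := ih hmN
    set a := (uP x w v m).1 with ha
    set b := (uP x w v m).2 with hbdef
    have hb : b ≠ 0 := by
      intro h
      rw [h, natDegree_zero] at ihm
      omega
    have hdpos : 0 < (x (m+1) - x m)/2 := by
      have := hx m (m+1) (by omega) hm
      linarith
    set s := Real.sinh ((x (m+1) - x m)/2) with hsdef
    set c := Real.cosh ((x (m+1) - x m)/2) with hcdef
    have hs : s ≠ 0 := by
      rw [hsdef, ne_eq, Real.sinh_eq_zero]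
      linarith
    have h2s : (2 * (s:ℂ)) ≠ 0 := by
      simp only [ne_eq, mul_eq_zero, Complex.ofReal_eq_zero, OfNat.ofNat_ne_zero, false_or]
      exact hs
    have hun : uP x w v (m+1) = joP (w (m+1)) (v (m+1)) (toP (x (m+1) - x m) (uP x w v m)) := by
      simp only [uP, yP]
    rw [hun]
    simp only [joP, toP]
    rw [← ha, ← hbdef, ← hsdef, ← hcdef]
    set D := b.natDegree with hD
    set y1 := C ((c:ℝ):ℂ) * a + C (2*(s:ℂ)) * b with hy1
    set y2 := C (1/2*(s:ℂ)) * a + C ((c:ℝ):ℂ) * b with hy2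
    have hy1le : y1.natDegree ≤ D := by
      apply le_trans (natDegree_add_le _ _)
      exact max_le ((natDegree_C_mul_le _ _).trans (le_of_lt ihm)) (natDegree_C_mul_le _ _)
    have hy1co : y1.coeff D = (2*(s:ℂ)) * b.leadingCoeff := by
      rw [hy1, coeff_add, coeff_C_mul, coeff_C_mul, coeff_eq_zero_of_natDegree_lt ihm,
        mul_zero, zero_add, coeff_natDegree]
    have hy1cone : y1.coeff D ≠ 0 := by
      rw [hy1co]
      exact mul_ne_zero h2s (leadingCoeff_ne_zero.2 hb)
    have hy1ne : y1 ≠ 0 := fun h => by simp [h] at hy1cone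
    have hy1deg : y1.natDegree = D := le_antisymm hy1le (le_natDegree_of_ne_zero hy1cone)
    have hy2le : y2.natDegree ≤ D := by
      apply le_trans (natDegree_add_le _ _)
      exact max_le ((natDegree_C_mul_le _ _).trans (le_of_lt ihm)) (natDegree_C_mul_le _ _)
    have hq := qP_deg (w (m+1)) (v (m+1)) (hnd (m+1) hm) (hv (m+1) hm)
    have hqne := qP_ne (w (m+1)) (v (m+1)) (hnd (m+1) hm) (hv (m+1) hm)
    set e := (qP (w (m+1)) (v (m+1))).natDegree with hE
    have hco : (y2 - qP (w (m+1)) (v (m+1)) * y1).coeff (e + D) ≠ 0 := by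
      rw [coeff_sub, coeff_eq_zero_of_natDegree_lt (lt_of_le_of_lt hy2le (by omega)), zero_sub,
        neg_ne_zero]
      have : (qP (w (m+1)) (v (m+1)) * y1).coeff (e + D)
          = (qP (w (m+1)) (v (m+1))).leadingCoeff * y1.leadingCoeff := by
        rw [← hy1deg]
        exact coeff_mul_degree_add_degree _ _
      rw [this]
      exact mul_ne_zero (leadingCoeff_ne_zero.2 hqne) (leadingCoeff_ne_zero.2 hy1ne)
    have := le_natDegree_of_ne_zero hco
    omega



/-! ### the piecewise eigenfunction -/

noncomputable def KK (N : ℕ) (x : ℕ → ℝ) (t : ℝ) : ℕ :=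
  Nat.findGreatest (fun k => x k ≤ t) (N-1)

theorem KK_le (N : ℕ) (x : ℕ → ℝ) (t : ℝ) : KK N x t ≤ N - 1 := by
  unfold KK; apply Nat.findGreatest_le

theorem KK_eq (N : ℕ) (hN : 1 ≤ N) (x : ℕ → ℝ) (hx : ∀ i j, i < j → j < N → x i < x j)
    (t : ℝ) (k : ℕ) (hk : k ≤ N-1) (h1 : x k ≤ t) (h2 : k = N-1 ∨ t < x (k+1)) :
    KK N x t = k := by
  have h0 : x 0 ≤ t := by
    rcases Nat.eq_zero_or_pos k with h | h
    · rwa [← h]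
    · exact le_trans (le_of_lt (hx 0 k h (by omega))) h1
  have hge : k ≤ KK N x t := by
    unfold KK; apply Nat.le_findGreatest hk h1
  apply le_antisymm _ hge
  by_contra hlt
  push_neg at hlt
  have hKle := KK_le N x t
  have hKspec : x (KK N x t) ≤ t := by
    unfold KK; exact Nat.findGreatest_spec (P := fun k => x k ≤ t) (Nat.zero_le _) h0
  rcases h2 with h2 | h2
  · omega
  · rcases eq_or_lt_of_le (show k + 1 ≤ KK N x t by omega) with h3 | h3
    · rw [← h3] at hKspec; linarith
    · have := hx (k+1) (KK N x t) h3 (by omega)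
      linarith

/-- the local solution piece on `[x k, x (k+1)]` -/
noncomputable def pc (x w v : ℕ → ℝ) (lam : ℝ) (k : ℕ) (t : ℝ) : ℝ :=
  Real.cosh ((t - x k)/2) * (uR x w v lam k).1 + 2 * Real.sinh ((t - x k)/2) * (uR x w v lam k).2

noncomputable def pd (x w v : ℕ → ℝ) (lam : ℝ) (k : ℕ) (t : ℝ) : ℝ :=
  (1/2) * Real.sinh ((t - x k)/2) * (uR x w v lam k).1 + Real.cosh ((t - x k)/2) * (uR x w v lam k).2

noncomputable def FF (N : ℕ) (x w v : ℕ → ℝ) (lam : ℝ) (t : ℝ) : ℝ :=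
  if t < x 0 then Real.exp (t/2) else pc x w v lam (KK N x t) t

noncomputable def FF' (N : ℕ) (x w v : ℕ → ℝ) (lam : ℝ) (t : ℝ) : ℝ :=
  if t < x 0 then (1/2) * Real.exp (t/2) else pd x w v lam (KK N x t) t

theorem pc_val (x w v : ℕ → ℝ) (lam : ℝ) (k : ℕ) :
    pc x w v lam k (x k) = (uR x w v lam k).1 := by
  simp [pc]

theorem pd_val (x w v : ℕ → ℝ) (lam : ℝ) (k : ℕ) :
    pd x w v lam k (x k) = (uR x w v lam k).2 := by
  simp [pd]

theorem pc_val_next (x w v : ℕ → ℝ) (lam : ℝ) (k : ℕ) :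
    pc x w v lam k (x (k+1)) = (yR x w v lam (k+1)).1 := by
  simp only [pc, yR, toR, uR]

theorem pd_val_next (x w v : ℕ → ℝ) (lam : ℝ) (k : ℕ) :
    pd x w v lam k (x (k+1)) = (yR x w v lam (k+1)).2 := by
  simp only [pd, yR, toR, uR]

theorem hasDerivAt_half (a t : ℝ) : HasDerivAt (fun s => (s - a)/2) (1/2) t := by
  simpa using ((hasDerivAt_id t).sub_const a).div_const 2

theorem hasDerivAt_pc (x w v : ℕ → ℝ) (lam : ℝ) (k : ℕ) (t : ℝ) :
    HasDerivAt (pc x w v lam k) (pd x w v lam k t) t := by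
  have hc : HasDerivAt (fun s => Real.cosh ((s - x k)/2)) ((1/2) * Real.sinh ((t - x k)/2)) t := by
    simpa [mul_comm, Function.comp_def] using (Real.hasDerivAt_cosh ((t - x k)/2)).comp t (hasDerivAt_half (x k) t)
  have hs : HasDerivAt (fun s => Real.sinh ((s - x k)/2)) ((1/2) * Real.cosh ((t - x k)/2)) t := by
    simpa [mul_comm, Function.comp_def] using (Real.hasDerivAt_sinh ((t - x k)/2)).comp t (hasDerivAt_half (x k) t)
  have := (hc.mul_const ((uR x w v lam k).1)).add
    (((hs.const_mul 2)).mul_const ((uR x w v lam k).2))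
  refine this.congr_deriv ?_
  simp only [pd]; ring

theorem hasDerivAt_pd (x w v : ℕ → ℝ) (lam : ℝ) (k : ℕ) (t : ℝ) :
    HasDerivAt (pd x w v lam k) ((1/4) * pc x w v lam k t) t := by
  have hc : HasDerivAt (fun s => Real.cosh ((s - x k)/2)) ((1/2) * Real.sinh ((t - x k)/2)) t := by
    simpa [mul_comm, Function.comp_def] using (Real.hasDerivAt_cosh ((t - x k)/2)).comp t (hasDerivAt_half (x k) t)
  have hs : HasDerivAt (fun s => Real.sinh ((s - x k)/2)) ((1/2) * Real.cosh ((t - x k)/2)) t := by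
    simpa [mul_comm, Function.comp_def] using (Real.hasDerivAt_sinh ((t - x k)/2)).comp t (hasDerivAt_half (x k) t)
  have := ((hs.const_mul (1/2)).mul_const ((uR x w v lam k).1)).add
    (hc.mul_const ((uR x w v lam k).2))
  refine this.congr_deriv ?_
  simp only [pc]; ring

theorem cont_pc (x w v : ℕ → ℝ) (lam : ℝ) (k : ℕ) : Continuous (pc x w v lam k) :=
  continuous_iff_continuousAt.2 fun t => (hasDerivAt_pc x w v lam k t).continuousAt

theorem cont_pd (x w v : ℕ → ℝ) (lam : ℝ) (k : ℕ) : Continuous (pd x w v lam k) :=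
  continuous_iff_continuousAt.2 fun t => (hasDerivAt_pd x w v lam k t).continuousAt

theorem FF_eq_pc (N : ℕ) (hN : 1 ≤ N) (x w v : ℕ → ℝ)
    (hx : ∀ i j, i < j → j < N → x i < x j) (lam : ℝ) (t : ℝ) (k : ℕ)
    (hk : k ≤ N-1) (h1 : x k ≤ t) (h2 : k = N-1 ∨ t < x (k+1)) :
    FF N x w v lam t = pc x w v lam k t ∧ FF' N x w v lam t = pd x w v lam k t := by
  have h0 : ¬ t < x 0 := by
    push_neg
    rcases Nat.eq_zero_or_pos k with h | h
    · rwa [← h]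
    · exact le_trans (le_of_lt (hx 0 k h (by omega))) h1
  rw [FF, FF', if_neg h0, if_neg h0, KK_eq N hN x hx t k hk h1 h2]
  exact ⟨rfl, rfl⟩



theorem KK_spec (N : ℕ) (x : ℕ → ℝ) (t : ℝ) (h : x 0 ≤ t) : x (KK N x t) ≤ t := by
  unfold KK; exact Nat.findGreatest_spec (P := fun k => x k ≤ t) (Nat.zero_le _) h

theorem KK_max (N : ℕ) (x : ℕ → ℝ) (t : ℝ) (k : ℕ) (hk : k ≤ N-1) (h : x k ≤ t) :
    k ≤ KK N x t := by
  unfold KK; exact Nat.le_findGreatest hk h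

theorem FF_node (N : ℕ) (hN : 1 ≤ N) (x w v : ℕ → ℝ)
    (hx : ∀ i j, i < j → j < N → x i < x j) (lam : ℝ) (n : ℕ) (hn : n < N) :
    FF N x w v lam (x n) = (yR x w v lam n).1
      ∧ FF' N x w v lam (x n) = (uR x w v lam n).2 := by
  have h2 : n = N-1 ∨ x n < x (n+1) := by
    rcases eq_or_ne n (N-1) with h | h
    · exact Or.inl h
    · exact Or.inr (hx n (n+1) (by omega) (by omega))
  obtain ⟨hf, hf'⟩ := FF_eq_pc N hN x w v hx lam (x n) n (by omega) le_rfl h2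
  rw [hf, hf', pc_val, pd_val]
  exact ⟨rfl, rfl⟩

theorem FF_models (N : ℕ) (hN : 1 ≤ N) (x w v : ℕ → ℝ)
    (hx : ∀ i j, i < j → j < N → x i < x j) (lam : ℝ) (t : ℝ) (ht : ∀ n, n < N → t ≠ x n) :
    ∃ S : Set ℝ, IsOpen S ∧ t ∈ S ∧
      ((∀ s ∈ S, FF N x w v lam s = Real.exp (s/2) ∧ FF' N x w v lam s = (1/2)*Real.exp (s/2))
       ∨ ∃ k, ∀ s ∈ S, FF N x w v lam s = pc x w v lam k s
            ∧ FF' N x w v lam s = pd x w v lam k s) := by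
  rcases lt_or_ge t (x 0) with h | h
  · exact ⟨Set.Iio (x 0), isOpen_Iio, h,
      Or.inl (fun s hs => ⟨if_pos hs, if_pos hs⟩)⟩
  · have h1 : x (KK N x t) ≤ t := KK_spec N x t h
    set k := KK N x t with hkk
    have hk : k ≤ N-1 := KK_le N x t
    have hlt : x k < t := lt_of_le_of_ne h1 (Ne.symm (ht k (by omega)))
    rcases eq_or_ne k (N-1) with he | he
    · refine ⟨Set.Ioi (x k), isOpen_Ioi, hlt, Or.inr ⟨k, fun s hs => ?_⟩⟩
      exact FF_eq_pc N hN x w v hx lam s k hk (le_of_lt hs) (Or.inl he)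
    · have h2 : t < x (k+1) := by
        by_contra hc
        push_neg at hc
        have := KK_max N x t (k+1) (by omega) hc
        omega
      refine ⟨Set.Ioo (x k) (x (k+1)), isOpen_Ioo, ⟨hlt, h2⟩, Or.inr ⟨k, fun s hs => ?_⟩⟩
      exact FF_eq_pc N hN x w v hx lam s k hk (le_of_lt hs.1) (Or.inr hs.2)

theorem hasDerivAt_half0 (t : ℝ) : HasDerivAt (fun s : ℝ => s/2) (1/2) t := by
  simpa using (hasDerivAt_id t).div_const 2

theorem hasDerivAt_exp2 (t : ℝ) :
    HasDerivAt (fun s : ℝ => Real.exp (s/2)) ((1/2) * Real.exp (t/2)) t := by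
  simpa [Function.comp_def, mul_comm] using (Real.hasDerivAt_exp (t/2)).comp t (hasDerivAt_half0 t)

theorem FF_deriv (N : ℕ) (hN : 1 ≤ N) (x w v : ℕ → ℝ)
    (hx : ∀ i j, i < j → j < N → x i < x j) (lam : ℝ) (t : ℝ) (ht : ∀ n, n < N → t ≠ x n) :
    HasDerivAt (FF N x w v lam) (FF' N x w v lam t) t ∧
    HasDerivAt (FF' N x w v lam) ((1/4) * FF N x w v lam t) t := by
  obtain ⟨S, hSo, htS, hS⟩ := FF_models N hN x w v hx lam t ht
  have hmem : S ∈ nhds t := hSo.mem_nhds htS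
  rcases hS with hS | ⟨k, hS⟩
  · have hev1 : FF N x w v lam =ᶠ[nhds t] (fun s => Real.exp (s/2)) :=
      Filter.eventually_of_mem hmem (fun s hs => (hS s hs).1)
    have hev2 : FF' N x w v lam =ᶠ[nhds t] (fun s => (1/2) * Real.exp (s/2)) :=
      Filter.eventually_of_mem hmem (fun s hs => (hS s hs).2)
    constructor
    · rw [(hS t htS).2]
      exact (hasDerivAt_exp2 t).congr_of_eventuallyEq hev1
    · have h2 : HasDerivAt (fun s => (1/2) * Real.exp (s/2)) ((1/4) * FF N x w v lam t) t := by
        rw [(hS t htS).1]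
        have := (hasDerivAt_exp2 t).const_mul (1/2)
        refine this.congr_deriv ?_
        ring
      exact h2.congr_of_eventuallyEq hev2
  · have hev1 : FF N x w v lam =ᶠ[nhds t] pc x w v lam k :=
      Filter.eventually_of_mem hmem (fun s hs => (hS s hs).1)
    have hev2 : FF' N x w v lam =ᶠ[nhds t] pd x w v lam k :=
      Filter.eventually_of_mem hmem (fun s hs => (hS s hs).2)
    constructor
    · rw [(hS t htS).2]
      exact (hasDerivAt_pc x w v lam k t).congr_of_eventuallyEq hev1
    · rw [(hS t htS).1]
      exact (hasDerivAt_pd x w v lam k t).congr_of_eventuallyEq hev2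

theorem FF_right (N : ℕ) (hN : 1 ≤ N) (x w v : ℕ → ℝ)
    (hx : ∀ i j, i < j → j < N → x i < x j) (lam : ℝ) (n : ℕ) (hn : n < N) :
    (∀ᶠ s in nhdsWithin (x n) (Set.Ioi (x n)),
      FF N x w v lam s = pc x w v lam n s ∧ FF' N x w v lam s = pd x w v lam n s) := by
  rcases eq_or_ne n (N-1) with he | he
  · apply Filter.eventually_of_mem self_mem_nhdsWithin
    intro s hs
    exact FF_eq_pc N hN x w v hx lam s n (by omega) (le_of_lt hs) (Or.inl he)
  · have hlt : x n < x (n+1) := hx n (n+1) (by omega) (by omega)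
    apply Filter.eventually_of_mem (Ioo_mem_nhdsGT_of_mem (Set.left_mem_Ico.2 hlt))
    intro s hs
    exact FF_eq_pc N hN x w v hx lam s n (by omega) (le_of_lt hs.1) (Or.inr hs.2)

theorem FF_left (N : ℕ) (hN : 1 ≤ N) (x w v : ℕ → ℝ)
    (hx : ∀ i j, i < j → j < N → x i < x j) (lam : ℝ) (n : ℕ) (hn : n + 1 < N) :
    (∀ᶠ s in nhdsWithin (x (n+1)) (Set.Iio (x (n+1))),
      FF N x w v lam s = pc x w v lam n s ∧ FF' N x w v lam s = pd x w v lam n s) := by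
  have hlt : x n < x (n+1) := hx n (n+1) (by omega) hn
  apply Filter.eventually_of_mem (Ioo_mem_nhdsLT_of_mem (Set.right_mem_Ioc.2 hlt))
  intro s hs
  exact FF_eq_pc N hN x w v hx lam s n (by omega) (le_of_lt hs.1) (Or.inr hs.2)

theorem FF_left0 (N : ℕ) (x w v : ℕ → ℝ) (lam : ℝ) :
    (∀ᶠ s in nhdsWithin (x 0) (Set.Iio (x 0)),
      FF N x w v lam s = Real.exp (s/2) ∧ FF' N x w v lam s = (1/2) * Real.exp (s/2)) := by
  apply Filter.eventually_of_mem self_mem_nhdsWithin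
  intro s hs
  exact ⟨if_pos hs, if_pos hs⟩

theorem FF_cont (N : ℕ) (hN : 1 ≤ N) (x w v : ℕ → ℝ)
    (hx : ∀ i j, i < j → j < N → x i < x j) (lam : ℝ) :
    Continuous (FF N x w v lam) := by
  rw [continuous_iff_continuousAt]
  intro t
  by_cases ht : ∀ n, n < N → t ≠ x n
  · exact (FF_deriv N hN x w v hx lam t ht).1.continuousAt
  · push_neg at ht
    obtain ⟨n, hn, rfl⟩ := ht
    rw [continuousAt_iff_continuous_left'_right']
    constructor
    · -- left continuity at x n
      rcases Nat.eq_zero_or_pos n with h0 | h0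
      · subst h0
        apply ContinuousWithinAt.congr_of_eventuallyEq
          (((Real.continuous_exp.comp (continuous_id.div_const 2)).continuousAt).continuousWithinAt)
        · exact (FF_left0 N x w v lam).mono (fun s hs => hs.1)
        · rw [(FF_node N hN x w v hx lam 0 (by omega)).1]
          simp [yR, Function.comp]
      · obtain ⟨m, rfl⟩ : ∃ m, n = m + 1 := ⟨n - 1, by omega⟩
        apply ContinuousWithinAt.congr_of_eventuallyEq
          ((cont_pc x w v lam m).continuousAt.continuousWithinAt)
        · exact (FF_left N hN x w v hx lam m hn).mono (fun s hs => hs.1)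
        · rw [(FF_node N hN x w v hx lam (m+1) hn).1, pc_val_next]
    · -- right continuity at x n
      apply ContinuousWithinAt.congr_of_eventuallyEq
        ((cont_pc x w v lam n).continuousAt.continuousWithinAt)
      · exact (FF_right N hN x w v hx lam n hn).mono (fun s hs => hs.1)
      · rw [(FF_node N hN x w v hx lam n hn).1, pc_val]
        simp [uR, joR]

theorem FF'_left_tendsto (N : ℕ) (hN : 1 ≤ N) (x w v : ℕ → ℝ)
    (hx : ∀ i j, i < j → j < N → x i < x j) (lam : ℝ) (n : ℕ) (hn : n < N) :
    Filter.Tendsto (FF' N x w v lam) (nhdsWithin (x n) (Set.Iio (x n)))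
      (nhds ((yR x w v lam n).2)) := by
  rcases Nat.eq_zero_or_pos n with h0 | h0
  · subst h0
    have hmodel : Filter.Tendsto (fun s => (1/2) * Real.exp (s/2))
        (nhdsWithin (x 0) (Set.Iio (x 0))) (nhds ((yR x w v lam 0).2)) := by
      have : (yR x w v lam 0).2 = (1/2) * Real.exp (x 0 / 2) := by simp [yR]
      rw [this]
      exact ((continuous_const.mul
        (Real.continuous_exp.comp (continuous_id.div_const 2))).continuousAt).continuousWithinAt.tendsto
    have hev : FF' N x w v lam =ᶠ[nhdsWithin (x 0) (Set.Iio (x 0))]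
        (fun s => (1/2) * Real.exp (s/2)) := (FF_left0 N x w v lam).mono (fun s hs => hs.2)
    exact hmodel.congr' hev.symm
  · obtain ⟨m, rfl⟩ : ∃ m, n = m + 1 := ⟨n - 1, by omega⟩
    have hmodel : Filter.Tendsto (pd x w v lam m)
        (nhdsWithin (x (m+1)) (Set.Iio (x (m+1)))) (nhds ((yR x w v lam (m+1)).2)) := by
      rw [← pd_val_next]
      exact ((cont_pd x w v lam m).continuousAt).continuousWithinAt.tendsto
    have hev : FF' N x w v lam =ᶠ[nhdsWithin (x (m+1)) (Set.Iio (x (m+1)))]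
        pd x w v lam m := (FF_left N hN x w v hx lam m hn).mono (fun s hs => hs.2)
    exact hmodel.congr' hev.symm

theorem FF'_right_tendsto (N : ℕ) (hN : 1 ≤ N) (x w v : ℕ → ℝ)
    (hx : ∀ i j, i < j → j < N → x i < x j) (lam : ℝ) (n : ℕ) (hn : n < N) :
    Filter.Tendsto (FF' N x w v lam) (nhdsWithin (x n) (Set.Ioi (x n)))
      (nhds ((uR x w v lam n).2)) := by
  have hmodel : Filter.Tendsto (pd x w v lam n)
      (nhdsWithin (x n) (Set.Ioi (x n))) (nhds ((uR x w v lam n).2)) := by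
    rw [← pd_val]
    exact ((cont_pd x w v lam n).continuousAt).continuousWithinAt.tendsto
  have hev : FF' N x w v lam =ᶠ[nhdsWithin (x n) (Set.Ioi (x n))]
      pd x w v lam n := (FF_right N hN x w v hx lam n hn).mono (fun s hs => hs.2)
  exact hmodel.congr' hev.symm

theorem FF_tail (N : ℕ) (hN : 1 ≤ N) (x w v : ℕ → ℝ)
    (hx : ∀ i j, i < j → j < N → x i < x j) (lam : ℝ)
    (heig : (uR x w v lam (N-1)).2 = -(1/2) * (uR x w v lam (N-1)).1)
    (t : ℝ) (h : x (N-1) ≤ t) :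
    FF N x w v lam t
      = (Real.exp (x (N-1)/2) * (uR x w v lam (N-1)).1) * Real.exp (-t/2) := by
  rw [(FF_eq_pc N hN x w v hx lam t (N-1) le_rfl h (Or.inl rfl)).1, pc, heig]
  have this1 : Real.cosh ((t - x (N-1))/2) - Real.sinh ((t - x (N-1))/2)
      = Real.exp (-((t - x (N-1))/2)) := Real.cosh_sub_sinh _
  have hexp : Real.exp (-((t - x (N-1))/2)) = Real.exp (x (N-1)/2) * Real.exp (-t/2) := by
    rw [← Real.exp_add]
    ring_nf
  linear_combination (uR x w v lam (N-1)).1 * this1 + (uR x w v lam (N-1)).1 * hexp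



theorem isSol_scaled (N : ℕ) (hN : 1 ≤ N) (x w v : ℕ → ℝ)
    (hx : ∀ i j, i < j → j < N → x i < x j) (lam : ℝ) (a : ℝ) :
    IsSol N x w v (lam:ℂ) (fun t => ((a * FF N x w v lam t : ℝ) : ℂ))
      (fun t => ((a * FF' N x w v lam t : ℝ) : ℂ)) := by
  refine ⟨?_, ?_, ?_⟩
  · exact Complex.continuous_ofReal.comp (continuous_const.mul (FF_cont N hN x w v hx lam))
  · intro t ht
    obtain ⟨h1, h2⟩ := FF_deriv N hN x w v hx lam t ht
    constructor
    · exact (h1.const_mul a).ofReal_comp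
    · have := (h2.const_mul a).ofReal_comp
      convert this using 1
      push_cast
      ring
  · intro n hn
    refine ⟨((a * (yR x w v lam n).2 : ℝ) : ℂ), ((a * (uR x w v lam n).2 : ℝ) : ℂ), ?_, ?_, ?_⟩
    · have hre : Filter.Tendsto (fun t => a * FF' N x w v lam t)
          (nhdsWithin (x n) (Set.Iio (x n))) (nhds (a * (yR x w v lam n).2)) :=
        (FF'_left_tendsto N hN x w v hx lam n hn).const_mul a
      exact (Complex.continuous_ofReal.tendsto _).comp hre
    · have hre : Filter.Tendsto (fun t => a * FF' N x w v lam t)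
          (nhdsWithin (x n) (Set.Ioi (x n))) (nhds (a * (uR x w v lam n).2)) :=
        (FF'_right_tendsto N hN x w v hx lam n hn).const_mul a
      exact (Complex.continuous_ofReal.tendsto _).comp hre
    · beta_reduce
      rw [(FF_node N hN x w v hx lam n hn).1]
      have hr : a * (uR x w v lam n).2 - a * (yR x w v lam n).2
          = -(lam * w n + lam^2 * v n) * (a * (yR x w v lam n).1) := by
        simp only [uR, joR]
        ring
      have hrC := congrArg (Complex.ofReal) hr
      push_cast at hrC ⊢
      linear_combination hrC

theorem chain_at_zero (x w v : ℕ → ℝ) (k : ℕ) :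
    eval 0 (uP x w v k).1 = ((Real.exp (x k / 2) : ℝ) : ℂ) ∧
    eval 0 (uP x w v k).2 = (((1/2) * Real.exp (x k / 2) : ℝ) : ℂ) := by
  have main : ∀ m, eval 0 (yP x w v m).1 = ((Real.exp (x m / 2) : ℝ) : ℂ) ∧
      eval 0 (yP x w v m).2 = (((1/2) * Real.exp (x m / 2) : ℝ) : ℂ) := by
    intro m
    induction m with
    | zero => simp [yP]
    | succ j ih =>
      obtain ⟨h1, h2⟩ := ih
      simp only [yP, toP, joP, qP, eval_add, eval_mul, eval_sub, eval_C, eval_X, eval_pow, h1, h2]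
      have hcs : Real.cosh ((x (j+1) - x j)/2) + Real.sinh ((x (j+1) - x j)/2)
          = Real.exp ((x (j+1) - x j)/2) := Real.cosh_add_sinh _
      have hex : Real.exp ((x (j+1) - x j)/2) * Real.exp (x j / 2) = Real.exp (x (j+1)/2) := by
        rw [← Real.exp_add]
        ring_nf
      constructor
      · push_cast
        have hcsC := congrArg (Complex.ofReal) hcs
        have hexC := congrArg (Complex.ofReal) hex
        push_cast at hcsC hexC
        linear_combination Complex.exp ((x j : ℂ)/2) * hcsC + hexC
      · push_cast
        have hcsC := congrArg (Complex.ofReal) hcs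
        have hexC := congrArg (Complex.ofReal) hex
        push_cast at hcsC hexC
        linear_combination (1/2 : ℂ) * Complex.exp ((x j : ℂ)/2) * hcsC + (1/2 : ℂ) * hexC
  obtain ⟨h1, h2⟩ := main k
  simp only [uP, joP, qP, eval_sub, eval_mul, eval_add, eval_C, eval_X, eval_pow, h1, h2]
  constructor
  · trivial
  · push_cast
    ring

theorem PPol_eval_zero (N : ℕ) (x w v : ℕ → ℝ) :
    eval 0 (PPol N x w v) = 0 := by
  obtain ⟨h1, h2⟩ := chain_at_zero x w v (N-1)
  rw [PPol, eval_mul, eval_sub, eval_mul, eval_C, eval_C, h1, h2]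
  push_cast
  ring

theorem PPol_eval_lam (N : ℕ) (hN : 1 ≤ N) (x w v : ℕ → ℝ) (lam : ℝ)
    (heig : (uR x w v lam (N-1)).2 = -(1/2) * (uR x w v lam (N-1)).1) :
    eval (lam:ℂ) (PPol N x w v)
      = ((Real.exp (x (N-1)/2) * (uR x w v lam (N-1)).1 : ℝ) : ℂ) := by
  obtain ⟨h1, h2⟩ := uP_eval x w v lam (N-1)
  rw [PPol, eval_mul, eval_sub, eval_mul, eval_C, eval_C, h1, h2, heig]
  rw [show Complex.exp ((x (N-1) : ℂ)/2) = ((Real.exp (x (N-1)/2) : ℝ) : ℂ) from (exp_cast _).symm]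
  push_cast
  ring



noncomputable def cval (N : ℕ) (x w v : ℕ → ℝ) (lam : ℝ) : ℝ :=
  Real.exp (x (N-1)/2) * (uR x w v lam (N-1)).1

noncomputable def Tval (N : ℕ) (x w v : ℕ → ℝ) (lam : ℝ) : ℝ :=
  ∑ n ∈ Finset.range N, (w n + 2*lam*v n) * (yR x w v lam n).1^2

theorem gamma_formula (N : ℕ) (hN : 1 ≤ N) (x w v : ℕ → ℝ)
    (hx : ∀ i j, i < j → j < N → x i < x j) (lam : ℝ)
    (heig : (uR x w v lam (N-1)).2 = -(1/2) * (uR x w v lam (N-1)).1) (γ : ℂ)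
    (hγeq : ∀ f f' : ℝ → ℂ, IsSol N x w v (lam:ℂ) f f' →
      (∀ t : ℝ, x (N - 1) ≤ t → f t = Complex.exp (-(t : ℂ) / 2)) →
      γ = (∑ n ∈ Finset.range N, (w n : ℂ) * f (x n) ^ 2)
        + 2 * (lam : ℂ) * ∑ n ∈ Finset.range N, (v n : ℂ) * f (x n) ^ 2) :
    γ = ((Tval N x w v lam : ℝ) : ℂ) / ((cval N x w v lam : ℝ) : ℂ)^2 := by
  have hu1 : (uR x w v lam (N-1)).1 ≠ 0 := u1_ne N hN x w v lam heig
  have hc : cval N x w v lam ≠ 0 := mul_ne_zero (Real.exp_ne_zero _) hu1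
  have hcC : ((cval N x w v lam : ℝ) : ℂ) ≠ 0 := by exact_mod_cast hc
  set a := (cval N x w v lam)⁻¹ with hadef
  have htail : ∀ t : ℝ, x (N-1) ≤ t →
      (fun t => ((a * FF N x w v lam t : ℝ) : ℂ)) t = Complex.exp (-(t:ℂ)/2) := by
    intro t htt
    beta_reduce
    rw [FF_tail N hN x w v hx lam heig t htt]
    rw [show a * (Real.exp (x (N-1)/2) * (uR x w v lam (N-1)).1 * Real.exp (-t/2))
        = Real.exp (-t/2) by rw [hadef]; field_simp [cval]; rfl]
    rw [exp_cast (-t)]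
    norm_cast
  have hmain := hγeq _ _ (isSol_scaled N hN x w v hx lam a) htail
  rw [hmain]
  have hnode : ∀ n ∈ Finset.range N,
      (fun t => ((a * FF N x w v lam t : ℝ) : ℂ)) (x n)
        = ((a * (yR x w v lam n).1 : ℝ) : ℂ) := by
    intro n hn
    beta_reduce
    rw [(FF_node N hN x w v hx lam n (Finset.mem_range.1 hn)).1]
  rw [Finset.sum_congr rfl (fun n hn => by rw [hnode n hn] :
    ∀ n ∈ Finset.range N, (w n : ℂ) * ((fun t => ((a * FF N x w v lam t : ℝ) : ℂ)) (x n))^2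
      = (w n : ℂ) * (((a * (yR x w v lam n).1 : ℝ) : ℂ))^2)]
  rw [Finset.sum_congr rfl (fun n hn => by rw [hnode n hn] :
    ∀ n ∈ Finset.range N, (v n : ℂ) * ((fun t => ((a * FF N x w v lam t : ℝ) : ℂ)) (x n))^2
      = (v n : ℂ) * (((a * (yR x w v lam n).1 : ℝ) : ℂ))^2)]
  rw [eq_div_iff (pow_ne_zero 2 hcC)]
  rw [Tval, Complex.ofReal_sum, add_mul, Finset.sum_mul, mul_assoc, Finset.sum_mul,
    Finset.mul_sum, ← Finset.sum_add_distrib]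
  apply Finset.sum_congr rfl
  intro n hn
  have hi : ((cval N x w v lam : ℝ) : ℂ)⁻¹ * ((cval N x w v lam : ℝ) : ℂ) = 1 :=
    inv_mul_cancel₀ hcC
  rw [hadef]
  push_cast
  linear_combination ((w n : ℂ) + 2*(lam:ℂ)*(v n : ℂ)) * (((yR x w v lam n).1 : ℂ))^2
    * (((cval N x w v lam : ℝ) : ℂ)⁻¹ * ((cval N x w v lam : ℝ) : ℂ) + 1) * hi

theorem SPol_self_gamma (N : ℕ) (hN : 1 ≤ N) (x w v : ℕ → ℝ) (lam : ℝ)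
    (heig : (uR x w v lam (N-1)).2 = -(1/2) * (uR x w v lam (N-1)).1) (γ : ℂ)
    (hγv : γ = ((Tval N x w v lam : ℝ) : ℂ) / ((cval N x w v lam : ℝ) : ℂ)^2) :
    eval (lam:ℂ) (SPol N x w v lam) = ((cval N x w v lam : ℝ) : ℂ) * γ := by
  have hu1 : (uR x w v lam (N-1)).1 ≠ 0 := u1_ne N hN x w v lam heig
  have hu1C : (((uR x w v lam (N-1)).1 : ℝ) : ℂ) ≠ 0 := by exact_mod_cast hu1
  have hc : cval N x w v lam ≠ 0 := mul_ne_zero (Real.exp_ne_zero _) hu1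
  have hcC : ((cval N x w v lam : ℝ) : ℂ) ≠ 0 := by exact_mod_cast hc
  have h1 : ((cval N x w v lam : ℝ) : ℂ)
      * (((Tval N x w v lam : ℝ) : ℂ) / ((cval N x w v lam : ℝ) : ℂ)^2)
      = ((Tval N x w v lam : ℝ) : ℂ) / ((cval N x w v lam : ℝ) : ℂ) := by
    field_simp
  rw [hγv, h1, SPol_eval_self N hN x w v lam,
    show ((∑ n ∈ Finset.range N, (w n + 2*lam*v n) * (yR x w v lam n).1^2 : ℝ) : ℂ)
      = ((Tval N x w v lam : ℝ) : ℂ) from by rw [Tval], eq_div_iff hcC]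
  have hee : Real.exp (-x (N-1)/2) * Real.exp (x (N-1)/2) = 1 := by
    rw [← Real.exp_add]
    ring_nf
    exact Real.exp_zero
  have heeC := congrArg (Complex.ofReal) hee
  have hinv : (((uR x w v lam (N-1)).1 : ℝ) : ℂ)⁻¹ * (((uR x w v lam (N-1)).1 : ℝ) : ℂ) = 1 :=
    inv_mul_cancel₀ hu1C
  rw [cval]
  push_cast at heeC ⊢
  linear_combination ((Tval N x w v lam : ℝ) : ℂ) * (((uR x w v lam (N-1)).1 : ℝ) : ℂ)
      * (((uR x w v lam (N-1)).1 : ℝ) : ℂ)⁻¹ * heeC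
    + ((Tval N x w v lam : ℝ) : ℂ) * hinv

end CHaux
end

open CHaux Polynomial in
/-- partial fraction expansion of the Weyl--Titchmarsh function:
for nonreal `z`, `M(z)/z = Σ_{λ ∈ σ} 1/(λ γ_λ² (λ - z))`. -/
theorem stmt_7 (N : ℕ) (hN : 1 ≤ N) (x w v : ℕ → ℝ)
    (hx : ∀ i j, i < j → j < N → x i < x j)
    (hv : ∀ n, n < N → 0 ≤ v n) (hnd : ∀ n, n < N → 0 < |w n| + v n)
    (σ : Finset ℝ)
    (hσ : ∀ z : ℂ, Wron N x w v z = 0 ↔ ∃ lam ∈ σ, (lam : ℂ) = z)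
    (γsq : ℝ → ℂ)
    (hγ : ∀ lam ∈ σ, ∀ f f' : ℝ → ℂ, IsSol N x w v (lam : ℂ) f f' →
      (∀ t : ℝ, x (N - 1) ≤ t → f t = Complex.exp (-(t : ℂ) / 2)) →
      γsq lam = (∑ n ∈ Finset.range N, (w n : ℂ) * f (x n) ^ 2)
        + 2 * (lam : ℂ) * ∑ n ∈ Finset.range N, (v n : ℂ) * f (x n) ^ 2) :
    ∀ z : ℂ, z.im ≠ 0 →
      WeylM N x w v z / z
        = ∑ lam ∈ σ, 1 / ((lam : ℂ) * γsq lam * ((lam : ℂ) - z)) := by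
  classical
  intro z hz
  have hN1 : N - 1 < N := by omega
  have hroot : ∀ lam ∈ σ, Wron N x w v (lam:ℂ) = 0 :=
    fun lam h => (hσ (lam:ℂ)).2 ⟨lam, h, rfl⟩
  have heig : ∀ lam ∈ σ, (uR x w v lam (N-1)).2 = -(1/2) * (uR x w v lam (N-1)).1 :=
    fun lam h => eigenRel N hN x w v lam (hroot lam h)
  have hu1 : ∀ lam ∈ σ, (uR x w v lam (N-1)).1 ≠ 0 :=
    fun lam h => u1_ne N hN x w v lam (heig lam h)
  have hcvne : ∀ lam ∈ σ, cval N x w v lam ≠ 0 :=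
    fun lam h => mul_ne_zero (Real.exp_ne_zero _) (hu1 lam h)
  have hcvC : ∀ lam ∈ σ, ((cval N x w v lam : ℝ) : ℂ) ≠ 0 :=
    fun lam h => by exact_mod_cast hcvne lam h
  have hγval : ∀ lam ∈ σ, γsq lam
      = ((Tval N x w v lam : ℝ) : ℂ) / ((cval N x w v lam : ℝ) : ℂ)^2 :=
    fun lam h => gamma_formula N hN x w v hx lam (heig lam h) (γsq lam) (hγ lam h)
  have hTpos : ∀ lam ∈ σ, 0 < lam * Tval N x w v lam :=
    fun lam h => gam_pos N hN x w v hx hv lam (heig lam h)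
  have hlamne : ∀ lam ∈ σ, lam ≠ 0 := by
    intro lam h h0
    have := hTpos lam h
    rw [h0, zero_mul] at this
    exact lt_irrefl 0 this
  have hTne : ∀ lam ∈ σ, Tval N x w v lam ≠ 0 := by
    intro lam h h0
    have := hTpos lam h
    rw [h0, mul_zero] at this
    exact lt_irrefl 0 this
  have hγne : ∀ lam ∈ σ, γsq lam ≠ 0 := by
    intro lam h
    rw [hγval lam h]
    apply div_ne_zero
    · exact_mod_cast hTne lam h
    · exact pow_ne_zero 2 (hcvC lam h)
  have hlγne : ∀ lam ∈ σ, (lam:ℂ) * γsq lam ≠ 0 := by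
    intro lam h
    apply mul_ne_zero _ (hγne lam h)
    exact_mod_cast hlamne lam h
  have hfac : ∀ lam ∈ σ, WPol N x w v = (C (lam:ℂ) - X) * SPol N x w v lam :=
    fun lam h => WPol_factor N hN x w v lam (heig lam h)
  have hSself : ∀ lam ∈ σ, eval (lam:ℂ) (SPol N x w v lam)
      = ((cval N x w v lam : ℝ) : ℂ) * γsq lam :=
    fun lam h => SPol_self_gamma N hN x w v lam (heig lam h) (γsq lam) (hγval lam h)
  have hSselfne : ∀ lam ∈ σ, eval (lam:ℂ) (SPol N x w v lam) ≠ 0 := by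
    intro lam h
    rw [hSself lam h]
    exact mul_ne_zero (hcvC lam h) (hγne lam h)
  have hSne : ∀ lam ∈ σ, SPol N x w v lam ≠ 0 := by
    intro lam h h0
    apply hSselfne lam h
    rw [h0, eval_zero]
  have hWne : WPol N x w v ≠ 0 := by
    intro h
    have h2 : Wron N x w v Complex.I = 0 := by
      rw [Wron_eval N hN, h, eval_zero]
    obtain ⟨l, _, hl⟩ := (hσ _).1 h2
    have := congrArg Complex.im hl
    simp at this
  -- roots of W
  have hroots : (WPol N x w v).roots = σ.val.map (fun r : ℝ => (r:ℂ)) := by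
    apply Multiset.ext.2
    intro a
    rw [Polynomial.count_roots]
    by_cases ha : ∃ l ∈ σ, (l:ℂ) = a
    · obtain ⟨l, hl, rfl⟩ := ha
      rw [Multiset.count_map_eq_count' _ _ Complex.ofReal_injective,
        Multiset.count_eq_one_of_mem σ.nodup hl]
      have hXC : (X - C ((l:ℝ):ℂ)) ≠ 0 := X_sub_C_ne_zero _
      have hle : rootMultiplicity ((l:ℝ):ℂ) (WPol N x w v) ≤ 1 := by
        by_contra hgt
        push_neg at hgt
        have hdvd : (X - C ((l:ℝ):ℂ))^2 ∣ WPol N x w v :=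
          dvd_trans (pow_dvd_pow _ hgt) (pow_rootMultiplicity_dvd _ _)
        rw [hfac l hl,
          show (C ((l:ℝ):ℂ) - X) * SPol N x w v l
            = (X - C ((l:ℝ):ℂ)) * (-(SPol N x w v l)) by ring, sq] at hdvd
        have hdvd2 : (X - C ((l:ℝ):ℂ)) ∣ -(SPol N x w v l) :=
          (mul_dvd_mul_iff_left hXC).1 hdvd
        obtain ⟨q, hq⟩ := (dvd_neg.1 hdvd2)
        apply hSselfne l hl
        rw [hq, eval_mul, eval_sub, eval_X, eval_C, sub_self, zero_mul]
      have hge : 1 ≤ rootMultiplicity ((l:ℝ):ℂ) (WPol N x w v) := by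
        apply (Polynomial.rootMultiplicity_pos hWne).2
        rw [Polynomial.IsRoot, ← Wron_eval N hN]
        exact hroot l hl
      omega
    · push_neg at ha
      have h1 : Multiset.count a (σ.val.map (fun r : ℝ => (r:ℂ))) = 0 := by
        rw [Multiset.count_eq_zero]
        intro hmem
        obtain ⟨l, hl, hla⟩ := Multiset.mem_map.1 hmem
        exact ha l hl hla
      rw [h1, Polynomial.rootMultiplicity_eq_zero]
      intro hr
      obtain ⟨l, hl, hla⟩ := (hσ a).1 (by rw [Wron_eval N hN]; exact hr)
      exact ha l hl hla
  have hdegW : (WPol N x w v).natDegree = σ.card := by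
    have hsp := IsAlgClosed.splits (WPol N x w v)
    have h2 := hsp.natDegree_eq_card_roots
    rw [h2, hroots, Multiset.card_map]
    rfl
  have hdlt := deg_lt N x w v hx hv hnd (N-1) hN1
  have hu2ne : (uP x w v (N-1)).2 ≠ 0 := by
    intro h
    rw [h, natDegree_zero] at hdlt
    omega
  have hWdeg2 : (WPol N x w v).natDegree = (uP x w v (N-1)).2.natDegree := by
    rw [WPol, natDegree_C_mul (Complex.exp_ne_zero _)]
    apply le_antisymm
    · apply le_trans (natDegree_add_le _ _)
      exact max_le le_rfl ((natDegree_C_mul_le _ _).trans (le_of_lt hdlt))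
    · apply le_natDegree_of_ne_zero
      rw [coeff_add, coeff_C_mul, coeff_eq_zero_of_natDegree_lt hdlt, mul_zero, add_zero,
        coeff_natDegree]
      exact leadingCoeff_ne_zero.2 hu2ne
  have hPdeg : (PPol N x w v).natDegree ≤ σ.card := by
    rw [← hdegW, hWdeg2, PPol]
    apply le_trans (natDegree_C_mul_le _ _)
    apply le_trans (natDegree_sub_le _ _)
    exact max_le ((natDegree_C_mul_le _ _).trans (le_of_lt hdlt)) le_rfl
  have hScard : 1 ≤ σ.card := by
    rw [← hdegW, hWdeg2]
    omega
  have hSdeg : ∀ lam ∈ σ, (SPol N x w v lam).natDegree = σ.card - 1 := by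
    intro lam h
    have hCX : (C ((lam:ℝ):ℂ) - X) ≠ 0 := by
      intro h0
      have := congrArg (eval (((lam:ℝ):ℂ) + 1)) h0
      simp at this
    have h1 : (WPol N x w v).natDegree = 1 + (SPol N x w v lam).natDegree := by
      rw [hfac lam h, natDegree_mul hCX (hSne lam h),
        show C ((lam:ℝ):ℂ) - X = -(X - C ((lam:ℝ):ℂ)) by ring, natDegree_neg,
        natDegree_X_sub_C]
    omega
  -- interpolation polynomial
  set HP : Polynomial ℂ := ∑ lam ∈ σ, C (((lam:ℂ) * γsq lam)⁻¹) * SPol N x w v lam with hHP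
  have hGdeg : (X * HP - PPol N x w v).natDegree ≤ σ.card := by
    apply le_trans (natDegree_sub_le _ _)
    apply max_le _ hPdeg
    apply le_trans natDegree_mul_le
    rw [natDegree_X]
    have hHdeg : HP.natDegree ≤ σ.card - 1 := by
      apply Polynomial.natDegree_sum_le_of_forall_le
      intro l hl
      exact (natDegree_C_mul_le _ _).trans (le_of_eq (hSdeg l hl))
    omega
  have hGzero : X * HP - PPol N x w v = 0 := by
    apply Polynomial.eq_zero_of_natDegree_lt_card_of_eval_eq_zero _
      (f := fun i : {y : ℝ // y ∈ insert (0:ℝ) σ} => ((i : ℝ) : ℂ))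
      (fun i j hij => Subtype.ext (Complex.ofReal_injective hij))
    · rintro ⟨i, hi⟩
      rcases Finset.mem_insert.1 hi with h0 | hmem
      · subst h0
        simp only [Complex.ofReal_zero, eval_sub, eval_mul, eval_X, zero_mul, zero_sub,
          neg_eq_zero]
        exact PPol_eval_zero N x w v
      · have hsum : eval ((i:ℝ):ℂ) HP = ((i:ℂ) * γsq i)⁻¹ * (((cval N x w v i : ℝ) : ℂ) * γsq i) := by
          rw [hHP, eval_finset_sum]
          rw [Finset.sum_eq_single_of_mem i hmem]
          · rw [eval_mul, eval_C, hSself i hmem]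
          · intro b hb hbne
            rw [eval_mul, eval_C]
            have hb0 : eval ((i:ℝ):ℂ) (SPol N x w v b) = 0 := by
              have hWi : eval ((i:ℝ):ℂ) (WPol N x w v) = 0 := by
                rw [← Wron_eval N hN]
                exact hroot i hmem
              rw [hfac b hb, eval_mul, eval_sub, eval_C, eval_X] at hWi
              rcases mul_eq_zero.1 hWi with h | h
              · exfalso
                have : (b:ℂ) = (i:ℂ) := by linear_combination h
                exact hbne (Complex.ofReal_injective this)
              · exact h
            rw [hb0, mul_zero]
        rw [eval_sub, eval_mul, eval_X, hsum, PPol_eval_lam N hN x w v i (heig i hmem)]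
        have hiC : ((i:ℝ):ℂ) ≠ 0 := by exact_mod_cast hlamne i hmem
        have hγi := hγne i hmem
        rw [show (((i:ℝ):ℂ) * γsq i)⁻¹ * (((cval N x w v i : ℝ) : ℂ) * γsq i)
            = ((cval N x w v i : ℝ) : ℂ) * (γsq i * (((i:ℝ):ℂ) * γsq i)⁻¹) by ring]
        rw [show cval N x w v i = Real.exp (x (N-1)/2) * (uR x w v i (N-1)).1 from rfl]
        field_simp
        ring
    · rw [Fintype.card_coe, Finset.card_insert_of_notMem (fun h => hlamne 0 h rfl)]
      omega
  -- final computation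
  have hzne : z ≠ 0 := by
    intro h
    apply hz
    rw [h]
    rfl
  have hWzne : eval z (WPol N x w v) ≠ 0 := by
    rw [← Wron_eval N hN]
    intro h
    obtain ⟨l, _, hl⟩ := (hσ z).1 h
    apply hz
    rw [← hl]
    exact Complex.ofReal_im l
  have hkey : z * eval z HP = eval z (PPol N x w v) := by
    have h2 := congrArg (eval z) hGzero
    rw [eval_sub, eval_mul, eval_X, eval_zero, sub_eq_zero] at h2
    exact h2
  rw [WeylM_eval N hN x w v z, div_div, ← hkey,
    show eval z (WPol N x w v) * z = z * eval z (WPol N x w v) by ring,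
    mul_div_mul_left _ _ hzne, hHP, eval_finset_sum, Finset.sum_div]
  apply Finset.sum_congr rfl
  intro lam hlam
  rw [eval_mul, eval_C]
  have hWz : eval z (WPol N x w v) = ((lam:ℂ) - z) * eval z (SPol N x w v lam) := by
    rw [hfac lam hlam, eval_mul, eval_sub, eval_C, eval_X]
  have hSzne : eval z (SPol N x w v lam) ≠ 0 := by
    intro h
    apply hWzne
    rw [hWz, h, mul_zero]
  have hlz : (lam:ℂ) - z ≠ 0 := by
    intro h
    apply hz
    rw [← sub_eq_zero.1 h]
    exact Complex.ofReal_im lam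
  rw [hWz]
  field_simp
end

section
/- Let a < b be extended reals and let f : (a,b) → ℂ be twice differentiable with f″(x) = (1/4) f(x) and f(x) ≠ 0 for all x ∈ (a,b). Define Λ(x) = 2 sinh(x/2) cosh(x/2) − 4 (f′(x)/f(x)) cosh²(x/2). Then Λ is differentiable on (a,b) with Λ′(x) = Λ(x)² / (4 cosh²(x/2)) for all x ∈ (a,b). -/
/-- the Riccati-type equation for
`Λ(x) = 2 sinh(x/2) cosh(x/2) - 4 (f'(x)/f(x)) cosh²(x/2)` where `-f'' + (1/4) f = 0`
and `f ≠ 0` on the (extended-real) open interval `(a, b)`: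
`Λ' = Λ² / (4 cosh²(x/2))` there. -/
theorem stmt_8 (a b : EReal) (hab : a < b) (f f' : ℝ → ℂ)
    (hf : ∀ x : ℝ, a < (x : EReal) → (x : EReal) < b → HasDerivAt f (f' x) x)
    (hf' : ∀ x : ℝ, a < (x : EReal) → (x : EReal) < b →
      HasDerivAt f' ((1 / 4) * f x) x)
    (hnz : ∀ x : ℝ, a < (x : EReal) → (x : EReal) < b → f x ≠ 0) :
    ∀ x : ℝ, a < (x : EReal) → (x : EReal) < b →
      HasDerivAt
        (fun y : ℝ => 2 * Complex.sinh ((y : ℂ) / 2) * Complex.cosh ((y : ℂ) / 2)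
          - 4 * (f' y / f y) * Complex.cosh ((y : ℂ) / 2) ^ 2)
        ((2 * Complex.sinh ((x : ℂ) / 2) * Complex.cosh ((x : ℂ) / 2)
          - 4 * (f' x / f x) * Complex.cosh ((x : ℂ) / 2) ^ 2) ^ 2
          / (4 * Complex.cosh ((x : ℂ) / 2) ^ 2)) x := by
  intro x hax hxb
  have hcosh : Complex.cosh ((x : ℂ) / 2) ≠ 0 := by
    have : ((x : ℂ) / 2) = ((x / 2 : ℝ) : ℂ) := by push_cast; ring
    rw [this, ← Complex.ofReal_cosh]
    exact_mod_cast (Real.cosh_pos (x / 2)).ne'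
  have hfx := hnz x hax hxb
  -- derivative of sinh(y/2)
  have hs : HasDerivAt (fun y : ℝ => Complex.sinh ((y : ℂ) / 2))
      (Complex.cosh ((x : ℂ) / 2) * (1 / 2)) x := by
    have h1 : HasDerivAt (fun w : ℂ => Complex.sinh (w / 2))
        (Complex.cosh ((x : ℂ) / 2) * (1 / 2)) (x : ℂ) := by
      have := (Complex.hasDerivAt_sinh ((x : ℂ) / 2)).comp (x : ℂ)
        ((hasDerivAt_id (x : ℂ)).div_const 2)
      simpa [Function.comp_def] using this
    exact h1.comp_ofReal
  have hc : HasDerivAt (fun y : ℝ => Complex.cosh ((y : ℂ) / 2))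
      (Complex.sinh ((x : ℂ) / 2) * (1 / 2)) x := by
    have h1 : HasDerivAt (fun w : ℂ => Complex.cosh (w / 2))
        (Complex.sinh ((x : ℂ) / 2) * (1 / 2)) (x : ℂ) := by
      have := (Complex.hasDerivAt_cosh ((x : ℂ) / 2)).comp (x : ℂ)
        ((hasDerivAt_id (x : ℂ)).div_const 2)
      simpa [Function.comp_def] using this
    exact h1.comp_ofReal
  -- derivative of f'/f
  have hg : HasDerivAt (fun y : ℝ => f' y / f y)
      (((1 / 4) * f x * f x - f' x * f' x) / f x ^ 2) x :=
    (hf' x hax hxb).div (hf x hax hxb) hfx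
  have H := (((hs.const_mul (2 : ℂ)).mul hc).sub
    (((hg.const_mul (4 : ℂ)).mul (hc.mul hc))))
  simp only [pow_two]
  convert H using 1
  · rfl
  · rfl
  simp only [Pi.mul_apply]
  field_simp [hfx, hcosh]
  ring
end

section
/- Let (s_k)_{k ≥ −1} be a sequence in a commutative ring, and for j ∈ {−1, 0, 1} and k ≥ 0 let Δ_{j,k} = det( (s_{i+i′+j})_{i,i′=0}^{k−1} ) denote the k×k Hankel determinant (with Δ_{j,0} = 1). Then for every k ≥ 0 one has Δ_{1,k+1} · Δ_{−1,k+1} − Δ_{1,k} · Δ_{−1,k+2} = (Δ_{0,k+1})². -/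
/-- The `k × k` Hankel determinant `Δ_{j,k} = det (s_{i+i'+j})_{i,i'=0}^{k-1}` of a
two-sided sequence `s`. -/
def hankelDet {R : Type*} [CommRing R] (s : ℤ → R) (j : ℤ) (k : ℕ) : R :=
  Matrix.det (Matrix.of fun i i' : Fin k => s (((i : ℕ) : ℤ) + ((i' : ℕ) : ℤ) + j))

namespace HankelDJ
set_option linter.unusedSectionVars false
open Matrix
open Matrix

variable {R : Type*} [CommRing R]

/-- Expansion of a determinant along one (replaced) column. -/
lemma det_updateCol_expand {m : Type*} [DecidableEq m] [Fintype m]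
    (A : Matrix m m R) (j : m) (b : m → R) :
    (A.updateCol j b).det = ∑ i, b i * (A.updateCol j (Pi.single i 1)).det := by
  have hb : b = ∑ i, b i • (Pi.single i (1 : R) : m → R) := by
    ext x
    simp [Pi.single_apply, Finset.sum_ite_eq']
  calc (A.updateCol j b).det = cramer A b j := rfl
    _ = cramer A (∑ i, b i • (Pi.single i (1 : R) : m → R)) j := by rw [← hb]
    _ = ∑ i, b i * (A.updateCol j (Pi.single i 1)).det := by
        rw [map_sum]
        simp [cramer_apply, mul_comm]

/-- Replacing a column by a standard basis vector gives a signed minor. -/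
lemma det_updateCol_single {m : ℕ} (A : Matrix (Fin (m + 1)) (Fin (m + 1)) R) (i j : Fin (m + 1)) :
    (A.updateCol j (Pi.single i 1)).det
      = (-1) ^ (i + j : ℕ) * (A.submatrix i.succAbove j.succAbove).det := by
  have h1 : A.updateCol j (Pi.single i 1) = ((Aᵀ).updateRow j (Pi.single i 1))ᵀ := by
    rw [← updateCol_transpose, transpose_transpose]
  rw [h1, det_transpose, ← adjugate_apply, adjugate_fin_succ_eq_det_submatrix]
  rw [show (Aᵀ).submatrix j.succAbove i.succAbove = (A.submatrix i.succAbove j.succAbove)ᵀ from rfl,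
    det_transpose, Nat.add_comm (j : ℕ) i]


variable {R : Type*} [CommRing R] {n : ℕ}

local notation "l" => Fin.last (n+1)

lemma zero_ne_last : (0 : Fin (n+2)) ≠ l := by
  simp [Fin.ext_iff]

lemma det_P (a b : Fin (n+2)) :
    (((1 : Matrix (Fin (n+2)) (Fin (n+2)) R).updateCol l (Pi.single b 1)).updateCol 0
        (Pi.single a 1)).det
      = (if a = 0 ∧ b = l then (1 : R) else 0) - (if a = l ∧ b = 0 then 1 else 0) := by
  set P := ((1 : Matrix (Fin (n+2)) (Fin (n+2)) R).updateCol l (Pi.single b 1)).updateCol 0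
      (Pi.single a 1) with hP
  have hcol : ∀ i j, P i j = if j = 0 then (if i = a then (1:R) else 0)
      else if j = l then (if i = b then 1 else 0) else if i = j then 1 else 0 := by
    intro i j
    rcases eq_or_ne j 0 with rfl | hj0
    · simp [hP, Pi.single_apply]
    · rcases eq_or_ne j l with rfl | hjl
      · rw [hP, updateCol_ne hj0, updateCol_self]
        simp [Pi.single_apply, hj0]
      · rw [hP, updateCol_ne hj0, updateCol_ne hjl]
        simp [one_apply, hj0, hjl]
  have colzero : ∀ i, P i 0 = if i = a then (1:R) else 0 := by
    intro i; rw [hcol]; simp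
  have collast : ∀ i, P i l = if i = b then (1:R) else 0 := by
    intro i; rw [hcol]; simp [zero_ne_last.symm]
  clear_value P
  by_cases ha0 : a = 0
  · subst ha0
    by_cases hbl : b = l
    · subst hbl
      have hP1 : P = 1 := by
        ext i j
        rw [hcol, one_apply]
        split_ifs <;> simp_all
      rw [hP1, det_one]
      simp [zero_ne_last.symm, zero_ne_last]
    · have hdet : P.det = 0 := by
        rcases eq_or_ne b 0 with rfl | hb0
        · exact det_zero_of_column_eq zero_ne_last
            (fun i => by rw [colzero, collast])
        · exact det_zero_of_column_eq (Ne.symm hbl)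
            (fun i => by rw [collast, hcol]; simp [hb0, hbl, eq_comm])
      rw [hdet]
      simp [hbl, zero_ne_last]
  · by_cases hal : a = l
    · subst hal
      by_cases hb0 : b = 0
      · subst hb0
        have hPswap : P = (1 : Matrix (Fin (n+2)) (Fin (n+2)) R).submatrix
            (Equiv.swap (0 : Fin (n+2)) l) id := by
          have hswap : ∀ i j : Fin (n+2), (Equiv.swap (0 : Fin (n+2)) l i = j)
              ↔ i = Equiv.swap (0 : Fin (n+2)) l j := fun i j => by
            rw [Equiv.apply_eq_iff_eq_symm_apply, Equiv.symm_swap]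
          ext i j
          rw [hcol, submatrix_apply, one_apply, id_eq]
          rcases eq_or_ne j 0 with rfl | hj0
          · rw [if_pos rfl]
            simp only [hswap, Equiv.swap_apply_left]
          · rcases eq_or_ne j l with rfl | hjl
            · rw [if_neg hj0, if_pos rfl]
              simp only [hswap, Equiv.swap_apply_right]
            · rw [if_neg hj0, if_neg hjl]
              simp only [hswap, Equiv.swap_apply_of_ne_of_ne hj0 hjl]
        rw [hPswap, det_permute, Equiv.Perm.sign_swap zero_ne_last, det_one]
        simp [zero_ne_last, zero_ne_last.symm]
      · have hdet : P.det = 0 := by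
          rcases eq_or_ne b l with rfl | hbl
          · exact det_zero_of_column_eq zero_ne_last
              (fun i => by rw [colzero, collast])
          · exact det_zero_of_column_eq (Ne.symm hbl)
              (fun i => by rw [collast, hcol]; simp [hb0, hbl, eq_comm])
        rw [hdet]
        simp [hb0, zero_ne_last.symm]
    · have hdet : P.det = 0 :=
        det_zero_of_column_eq (Ne.symm ha0)
          (fun i => by rw [colzero, hcol]; simp [ha0, hal, eq_comm])
      rw [hdet]
      simp [ha0, hal]

lemma updateCol_comm (A : Matrix (Fin (n+2)) (Fin (n+2)) R) {j j' : Fin (n+2)} (h : j ≠ j')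
    (u v : Fin (n+2) → R) :
    (A.updateCol j u).updateCol j' v = (A.updateCol j' v).updateCol j u := by
  ext i c
  rcases eq_or_ne c j' with rfl | h1
  · rw [updateCol_self, updateCol_ne h.symm, updateCol_self]
  · rcases eq_or_ne c j with rfl | h2
    · rw [updateCol_ne h1, updateCol_self, updateCol_self]
    · rw [updateCol_ne h1, updateCol_ne h2, updateCol_ne h2, updateCol_ne h1]

lemma det_corner (c0 cl : Fin (n+2) → R) :
    (((1 : Matrix (Fin (n+2)) (Fin (n+2)) R).updateCol 0 c0).updateCol l cl).det
      = c0 0 * cl l - c0 l * cl 0 := by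
  rw [det_updateCol_expand]
  have step : ∀ b : Fin (n+2),
      ((1 : Matrix (Fin (n+2)) (Fin (n+2)) R).updateCol 0 c0).updateCol l (Pi.single b 1)
      = ((1 : Matrix (Fin (n+2)) (Fin (n+2)) R).updateCol l (Pi.single b 1)).updateCol 0 c0 :=
    fun b => updateCol_comm _ zero_ne_last _ _
  have inner : ∀ b : Fin (n+2),
      (((1 : Matrix (Fin (n+2)) (Fin (n+2)) R).updateCol l (Pi.single b 1)).updateCol
          0 c0).det
      = (if b = l then c0 0 else 0) - (if b = 0 then c0 l else 0) := by
    intro b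
    rw [det_updateCol_expand]
    simp only [det_P, mul_sub, Finset.sum_sub_distrib, ite_and, mul_ite, mul_one, mul_zero,
      Finset.sum_ite_eq', Finset.mem_univ, if_true]
  simp_rw [step, inner]
  simp only [mul_sub, Finset.sum_sub_distrib, mul_ite, mul_zero,
    Finset.sum_ite_eq', Finset.mem_univ, if_true]
  ring

lemma det_E (M : Matrix (Fin (n+2)) (Fin (n+2)) R) :
    ((M.updateCol 0 (Pi.single 0 1)).updateCol l (Pi.single l 1)).det
      = (M.submatrix (fun i : Fin n => i.succ.castSucc)
          (fun i : Fin n => i.succ.castSucc)).det := by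
  rw [det_updateCol_single (m := n+1) (M.updateCol 0 (Pi.single 0 1)) l l]
  have hev : (-1 : R) ^ ((l : ℕ) + (l : ℕ)) = 1 :=
    Even.neg_one_pow ⟨n+1, by simp [Fin.val_last]⟩
  rw [hev, one_mul]
  have hsub : (M.updateCol 0 (Pi.single 0 1)).submatrix
        (Fin.succAbove l) (Fin.succAbove l)
      = (M.submatrix Fin.castSucc Fin.castSucc).updateCol 0 (Pi.single 0 1) := by
    ext i j
    rw [Fin.succAbove_last, submatrix_apply]
    rcases eq_or_ne j 0 with rfl | hj0
    · rw [show Fin.castSucc (0 : Fin (n+1)) = (0 : Fin (n+2)) from rfl, updateCol_self,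
        updateCol_self]
      simp [Pi.single_apply]
    · rw [updateCol_ne (Fin.castSucc_ne_zero_iff.mpr hj0), updateCol_ne hj0,
        submatrix_apply]
  rw [hsub, det_updateCol_single (m := n) _ 0 0]
  simp [submatrix_submatrix, Function.comp_def]

lemma key (M : Matrix (Fin (n+2)) (Fin (n+2)) R) :
    M.det * (adjugate M 0 0 * adjugate M l l - adjugate M l 0 * adjugate M 0 l)
      = M.det ^ 2 * (M.submatrix (fun i : Fin n => i.succ.castSucc)
          (fun i : Fin n => i.succ.castSucc)).det := by
  set C := ((1 : Matrix (Fin (n+2)) (Fin (n+2)) R).updateCol 0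
      (fun i => adjugate M i 0)).updateCol l (fun i => adjugate M i l) with hC
  have hdetC : C.det = adjugate M 0 0 * adjugate M l l - adjugate M l 0 * adjugate M 0 l := by
    rw [hC, det_corner]
  have hMC : M * C = (M.updateCol 0 (M.det • (Pi.single 0 1 : Fin (n+2) → R))).updateCol l
      (M.det • (Pi.single l 1 : Fin (n+2) → R)) := by
    ext i j
    rcases eq_or_ne j l with rfl | hjl
    · have hC' : ∀ k, C k l = adjugate M k l := fun k => by rw [hC, updateCol_self]
      have h1 : (M * C) i l = (M * adjugate M) i l := by
        simp only [mul_apply, hC']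
      rw [h1, mul_adjugate, updateCol_self]
      simp [one_apply, Pi.single_apply, eq_comm]
    · rcases eq_or_ne j 0 with rfl | hj0
      · have hC' : ∀ k, C k 0 = adjugate M k 0 := fun k => by
          rw [hC, updateCol_ne zero_ne_last, updateCol_self]
        have h1 : (M * C) i 0 = (M * adjugate M) i 0 := by
          simp only [mul_apply, hC']
        rw [h1, mul_adjugate, updateCol_ne hjl, updateCol_self]
        simp [one_apply, Pi.single_apply, eq_comm]
      · have hC' : ∀ k, C k j = (1 : Matrix (Fin (n+2)) (Fin (n+2)) R) k j := fun k => by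
          rw [hC, updateCol_ne hjl, updateCol_ne hj0]
        rw [updateCol_ne hjl, updateCol_ne hj0]
        simp only [mul_apply, hC', one_apply, mul_ite, mul_one, mul_zero,
          Finset.sum_ite_eq', Finset.mem_univ, if_true]
  have hD : ((M.updateCol 0 (M.det • (Pi.single 0 1 : Fin (n+2) → R))).updateCol l
        (M.det • (Pi.single l 1 : Fin (n+2) → R))).det
      = M.det ^ 2 * (M.submatrix (fun i : Fin n => i.succ.castSucc)
          (fun i : Fin n => i.succ.castSucc)).det := by
    rw [det_updateCol_smul, updateCol_comm _ zero_ne_last, det_updateCol_smul,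
      updateCol_comm _ zero_ne_last.symm, det_E]
    ring
  have := det_mul M C
  rw [hMC, hD, hdetC] at this
  exact this.symm

set_option maxHeartbeats 800000 in
/-- Desnanot–Jacobi / Sylvester determinant identity (corner version). -/
lemma dj (M : Matrix (Fin (n+2)) (Fin (n+2)) R) :
    adjugate M 0 0 * adjugate M l l - adjugate M l 0 * adjugate M 0 l
      = M.det * (M.submatrix (fun i : Fin n => i.succ.castSucc)
          (fun i : Fin n => i.succ.castSucc)).det := by
  let X : Matrix (Fin (n+2)) (Fin (n+2)) (MvPolynomial (Fin (n+2) × Fin (n+2)) ℤ) :=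
    Matrix.of fun i j => MvPolynomial.X (i, j)
  have hXdet : X.det ≠ 0 := by
    intro h
    have h2 := congrArg (MvPolynomial.eval
      (fun p : Fin (n+2) × Fin (n+2) => if p.1 = p.2 then (1:ℤ) else 0)) h
    rw [RingHom.map_det, map_zero] at h2
    have h3 : X.map (MvPolynomial.eval
        (fun p : Fin (n+2) × Fin (n+2) => if p.1 = p.2 then (1:ℤ) else 0))
        = (1 : Matrix (Fin (n+2)) (Fin (n+2)) ℤ) := by
      ext i j
      simp [X, one_apply]
    rw [show (MvPolynomial.eval
        (fun p : Fin (n+2) × Fin (n+2) => if p.1 = p.2 then (1:ℤ) else 0)).mapMatrix X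
        = X.map (MvPolynomial.eval
        (fun p : Fin (n+2) × Fin (n+2) => if p.1 = p.2 then (1:ℤ) else 0)) from rfl,
      h3, det_one] at h2
    exact one_ne_zero h2
  have hgen : adjugate X 0 0 * adjugate X l l - adjugate X l 0 * adjugate X 0 l
      = X.det * (X.submatrix (fun i : Fin n => i.succ.castSucc)
          (fun i : Fin n => i.succ.castSucc)).det := by
    have h := key X
    rw [pow_two, mul_assoc] at h
    exact mul_left_cancel₀ hXdet h
  let φ : MvPolynomial (Fin (n+2) × Fin (n+2)) ℤ →+* R :=
    MvPolynomial.eval₂Hom (Int.castRingHom R) (fun p => M p.1 p.2)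
  have hmap : φ.mapMatrix X = M := by
    ext i j
    simp [X, φ]
  have h := congrArg φ hgen
  rw [map_sub, _root_.map_mul, _root_.map_mul, _root_.map_mul] at h
  have hadj : ∀ a b : Fin (n+2), φ (adjugate X a b) = adjugate M a b := by
    intro a b
    have := congrFun (congrFun (RingHom.map_adjugate φ X) a) b
    rw [hmap] at this
    exact this
  have hdet : φ X.det = M.det := by rw [RingHom.map_det, hmap]
  have hsub : φ (X.submatrix (fun i : Fin n => i.succ.castSucc)
      (fun i : Fin n => i.succ.castSucc)).det
      = (M.submatrix (fun i : Fin n => i.succ.castSucc)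
          (fun i : Fin n => i.succ.castSucc)).det := by
    rw [RingHom.map_det]
    congr 1
    show (X.submatrix _ _).map φ = _
    rw [← submatrix_map]
    show (φ.mapMatrix X).submatrix _ _ = _
    rw [hmap]
  rw [hadj, hadj, hadj, hadj, hdet, hsub] at h
  exact h

end HankelDJ

open Matrix in
/-- the Hankel determinant identity
`Δ_{1,k+1} Δ_{-1,k+1} - Δ_{1,k} Δ_{-1,k+2} = (Δ_{0,k+1})²`
(a consequence of Sylvester's determinant identity). -/
theorem stmt_15 {R : Type*} [CommRing R] (s : ℤ → R) (k : ℕ) :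
    hankelDet s 1 (k + 1) * hankelDet s (-1) (k + 1)
      - hankelDet s 1 k * hankelDet s (-1) (k + 2)
      = (hankelDet s 0 (k + 1)) ^ 2 := by
  set M : Matrix (Fin (k+2)) (Fin (k+2)) R :=
    Matrix.of fun i i' : Fin (k+2) => s (((i : ℕ) : ℤ) + ((i' : ℕ) : ℤ) + (-1)) with hM
  have h := HankelDJ.dj (n := k) M
  have e1 : adjugate M 0 0 = hankelDet s 1 (k+1) := by
    rw [adjugate_fin_succ_eq_det_submatrix]
    have : M.submatrix (Fin.succAbove 0) (Fin.succAbove 0)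
        = Matrix.of fun i i' : Fin (k+1) => s (((i : ℕ) : ℤ) + ((i' : ℕ) : ℤ) + 1) := by
      ext i i'
      simp only [hM, submatrix_apply, of_apply, Fin.succAbove_zero]
      congr 1
      push_cast [Fin.val_succ]
      ring
    rw [this]
    simp [hankelDet]
  have e2 : adjugate M (Fin.last (k+1)) (Fin.last (k+1)) = hankelDet s (-1) (k+1) := by
    rw [adjugate_fin_succ_eq_det_submatrix]
    have : M.submatrix (Fin.succAbove (Fin.last (k+1))) (Fin.succAbove (Fin.last (k+1)))
        = Matrix.of fun i i' : Fin (k+1) => s (((i : ℕ) : ℤ) + ((i' : ℕ) : ℤ) + (-1)) := by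
      ext i i'
      simp only [hM, submatrix_apply, of_apply, Fin.succAbove_last]
      all_goals congr 1 <;> (try push_cast) <;> (try ring)
    rw [this]
    have hev : (-1 : R) ^ ((Fin.last (k+1) : ℕ) + (Fin.last (k+1) : ℕ)) = 1 :=
      Even.neg_one_pow ⟨k+1, by simp [Fin.val_last]⟩
    rw [hev, one_mul]
    rfl
  have e3 : adjugate M (Fin.last (k+1)) 0 = (-1) ^ (k+1) * hankelDet s 0 (k+1) := by
    rw [adjugate_fin_succ_eq_det_submatrix]
    have : M.submatrix (Fin.succAbove 0) (Fin.succAbove (Fin.last (k+1)))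
        = Matrix.of fun i i' : Fin (k+1) => s (((i : ℕ) : ℤ) + ((i' : ℕ) : ℤ) + 0) := by
      ext i i'
      simp only [hM, submatrix_apply, of_apply, Fin.succAbove_zero, Fin.succAbove_last]
      congr 1
      push_cast [Fin.val_succ, Fin.coe_castSucc]
      ring
    rw [this]
    simp [hankelDet, Fin.val_last]
  have e4 : adjugate M 0 (Fin.last (k+1)) = (-1) ^ (k+1) * hankelDet s 0 (k+1) := by
    rw [adjugate_fin_succ_eq_det_submatrix]
    have : M.submatrix (Fin.succAbove (Fin.last (k+1))) (Fin.succAbove 0)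
        = Matrix.of fun i i' : Fin (k+1) => s (((i : ℕ) : ℤ) + ((i' : ℕ) : ℤ) + 0) := by
      ext i i'
      simp only [hM, submatrix_apply, of_apply, Fin.succAbove_zero, Fin.succAbove_last]
      congr 1
      push_cast [Fin.val_succ, Fin.coe_castSucc]
      ring
    rw [this]
    simp [hankelDet, Fin.val_last]
  have e5 : M.det = hankelDet s (-1) (k+2) := rfl
  have e6 : (M.submatrix (fun i : Fin k => i.succ.castSucc)
      (fun i : Fin k => i.succ.castSucc)).det = hankelDet s 1 k := by
    have : M.submatrix (fun i : Fin k => i.succ.castSucc) (fun i : Fin k => i.succ.castSucc)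
        = Matrix.of fun i i' : Fin k => s (((i : ℕ) : ℤ) + ((i' : ℕ) : ℤ) + 1) := by
      ext i i'
      simp only [hM, submatrix_apply, of_apply]
      congr 1
      push_cast [Fin.val_succ, Fin.coe_castSucc]
      ring
    rw [this]
    rfl
  rw [e1, e2, e3, e4, e5, e6] at h
  have ha : (-1 : R) ^ (k+1) * (-1 : R) ^ (k+1) = 1 := by
    rw [← pow_add]
    exact Even.neg_one_pow ⟨k+1, rfl⟩
  linear_combination h + (hankelDet s 0 (k+1)) ^ 2 * ha
end

section
/- Let I ⊆ ℝ be an open interval and let x_n, ω_n : I → ℝ (n = 1,…,N) be differentiable functions with x_1(t) < ⋯ < x_N(t) and ω_n(t) ≠ 0 for all t ∈ I, satisfying the multi-peakon system x_n′(t) = (1/2) Σ_{k=1}^N ω_k(t) e^{−|x_n(t)−x_k(t)|} and ω_n′(t) = (1/2) Σ_{k=1}^N ω_n(t) ω_k(t) sgn(x_n(t)−x_k(t)) e^{−|x_n(t)−x_k(t)|} (with sgn(0)=0). Then the flow is isospectral: for all s, t ∈ I and all z ∈ ℂ, W(z, t) = W(z, s), where W(·, t) is the Wronskian polynomial built from the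 data x_1(t) < ⋯ < x_N(t), ω_1(t),…,ω_N(t) and υ_1 = ⋯ = υ_N = 0. -/
open scoped BigOperators

/-! ### Auxiliary machinery for the proof -/

/-- Coefficients `(a_n, b_n)` of the Jost solution `a_n e^{x/2} + b_n e^{-x/2}` in the region
to the right of `x n` (with `υ = 0`). -/
noncomputable def abA (x w : ℕ → ℝ) (z : ℂ) : ℕ → ℂ × ℂ
  | 0 => (1 - z * (w 0 : ℂ), z * (w 0 : ℂ) * Complex.exp ((x 0 : ℂ)))
  | n + 1 =>
      ((abA x w z n).1 - z * (w (n + 1) : ℂ) *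
          ((abA x w z n).1 + (abA x w z n).2 * Complex.exp (-(x (n + 1) : ℂ))),
        (abA x w z n).2 + z * (w (n + 1) : ℂ) *
          ((abA x w z n).1 * Complex.exp ((x (n + 1) : ℂ)) + (abA x w z n).2))

/-- `transVec` truncated after `n + 1` point interactions. -/
noncomputable def tv (x w : ℕ → ℝ) (z : ℂ) (n : ℕ) : Fin 2 → ℂ :=
  Matrix.mulVec
    ((((List.range n).reverse.map
        (fun j => Omat (w (j + 1)) 0 z * Tmat (x (j + 1) - x j))).prod)
      * Omat (w 0) 0 z)
    ![Complex.exp ((x 0 : ℂ) / 2), (1 / 2) * Complex.exp ((x 0 : ℂ) / 2)]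

lemma mulVec2 (M : Matrix (Fin 2) (Fin 2) ℂ) (u v : ℂ) :
    Matrix.mulVec M ![u, v] = ![M 0 0 * u + M 0 1 * v, M 1 0 * u + M 1 1 * v] := by
  funext i
  fin_cases i <;>
    simp [Matrix.mulVec, dotProduct, Fin.sum_univ_two]

lemma tv_succ (x w : ℕ → ℝ) (z : ℂ) (n : ℕ) :
    tv x w z (n + 1)
      = Matrix.mulVec (Omat (w (n + 1)) 0 z * Tmat (x (n + 1) - x n)) (tv x w z n) := by
  unfold tv
  rw [List.range_succ]
  simp only [List.reverse_append, List.reverse_cons, List.reverse_nil, List.nil_append,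
    List.singleton_append, List.map_cons, List.prod_cons]
  rw [Matrix.mulVec_mulVec, ← mul_assoc]

lemma tv_eq (x w : ℕ → ℝ) (z : ℂ) (n : ℕ) :
    tv x w z n
      = ![(abA x w z n).1 * Complex.exp ((x n : ℂ) / 2)
            + (abA x w z n).2 * Complex.exp (-(x n : ℂ) / 2),
          (1 / 2) * ((abA x w z n).1 * Complex.exp ((x n : ℂ) / 2)
            - (abA x w z n).2 * Complex.exp (-(x n : ℂ) / 2))] := by
  induction n with
  | zero =>
      have h0 : tv x w z 0
          = Matrix.mulVec (Omat (w 0) 0 z)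
              ![Complex.exp ((x 0 : ℂ) / 2), (1 / 2) * Complex.exp ((x 0 : ℂ) / 2)] := by
        simp [tv]
      have h : Complex.exp ((x 0 : ℂ)) * Complex.exp (-(x 0 : ℂ) / 2)
          = Complex.exp ((x 0 : ℂ) / 2) := by
        rw [← Complex.exp_add, show (x 0 : ℂ) + -(x 0 : ℂ) / 2 = (x 0 : ℂ) / 2 by ring]
      rw [h0, mulVec2]
      funext i
      fin_cases i <;>
        simp only [Omat, abA, Matrix.cons_val', Matrix.cons_val_zero, Matrix.cons_val_one,
          Matrix.head_cons, Matrix.head_fin_const, Matrix.empty_val', Matrix.cons_val_fin_one,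
          Matrix.of_apply, Complex.ofReal_zero, Fin.isValue, Fin.mk_zero, Fin.mk_one]
      · linear_combination (-(z * (w 0 : ℂ))) * h
      · linear_combination (z * (w 0 : ℂ) / 2) * h
  | succ n ih =>
      rw [tv_succ, ih, ← Matrix.mulVec_mulVec, mulVec2 (Tmat (x (n + 1) - x n)), mulVec2]
      have hu1 : Complex.exp ((↑(x (n + 1) - x n) : ℂ) / 2) * Complex.exp ((x n : ℂ) / 2)
          = Complex.exp ((x (n + 1) : ℂ) / 2) := by
        rw [← Complex.exp_add]
        congr 1
        push_cast
        ring
      have hu2 : Complex.exp (-((↑(x (n + 1) - x n) : ℂ) / 2)) * Complex.exp (-(x n : ℂ) / 2)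
          = Complex.exp (-(x (n + 1) : ℂ) / 2) := by
        rw [← Complex.exp_add]
        congr 1
        push_cast
        ring
      have hu3 : Complex.exp ((x (n + 1) : ℂ)) * Complex.exp (-(x (n + 1) : ℂ) / 2)
          = Complex.exp ((x (n + 1) : ℂ) / 2) := by
        rw [← Complex.exp_add]
        congr 1
        ring
      have hu4 : Complex.exp (-(x (n + 1) : ℂ)) * Complex.exp ((x (n + 1) : ℂ) / 2)
          = Complex.exp (-(x (n + 1) : ℂ) / 2) := by
        rw [← Complex.exp_add]
        congr 1
        ring
      funext i
      fin_cases i <;>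
        simp only [Omat, Tmat, abA, Complex.cosh, Complex.sinh, Matrix.cons_val',
          Matrix.cons_val_zero, Matrix.cons_val_one, Matrix.head_cons, Matrix.head_fin_const,
          Matrix.empty_val', Matrix.cons_val_fin_one, Matrix.of_apply, Complex.ofReal_zero,
          Fin.isValue, Fin.mk_zero, Fin.mk_one]
      · linear_combination ((abA x w z n).1) * hu1 + ((abA x w z n).2) * hu2
          + (-((abA x w z n).1 * z * (w (n + 1) : ℂ))) * hu3
          + ((abA x w z n).2 * z * (w (n + 1) : ℂ)) * hu4
      · linear_combination ((abA x w z n).1 / 2 - (abA x w z n).1 * z * (w (n + 1) : ℂ)) * hu1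
          + (-((abA x w z n).2 / 2) - (abA x w z n).2 * z * (w (n + 1) : ℂ)) * hu2
          + ((abA x w z n).1 * z * (w (n + 1) : ℂ) / 2) * hu3
          + ((abA x w z n).2 * z * (w (n + 1) : ℂ) / 2) * hu4

lemma Wron_eq_abA (N : ℕ) (hN : N ≠ 0) (x w : ℕ → ℝ) (z : ℂ) :
    Wron N x w (fun _ => 0) z = (abA x w z (N - 1)).1 := by
  have htv : transVec N x w (fun _ => 0) z = tv x w z (N - 1) := rfl
  rw [Wron, if_neg hN, htv, tv_eq]
  have h : Complex.exp (-(x (N - 1) : ℂ) / 2) * Complex.exp ((x (N - 1) : ℂ) / 2) = 1 := by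
    rw [← Complex.exp_add, show -(x (N - 1) : ℂ) / 2 + (x (N - 1) : ℂ) / 2 = 0 by ring,
      Complex.exp_zero]
  simp only [Matrix.cons_val_one, Matrix.head_cons, Matrix.cons_val_zero]
  linear_combination ((abA x w z (N - 1)).1) * h

/-- `P_n = (1/2) Σ_{k<n} w_k e^{x_k}`. -/
noncomputable def PcR (x w : ℕ → ℝ) (n : ℕ) : ℝ :=
  (1 / 2) * ∑ k ∈ Finset.range n, w k * Real.exp (x k)

/-- `Q_n = (1/2) Σ_{n≤k<N} w_k e^{-x_k}`. -/
noncomputable def QcR (N : ℕ) (x w : ℕ → ℝ) (n : ℕ) : ℝ :=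
  (1 / 2) * ∑ k ∈ Finset.Ico n N, w k * Real.exp (-x k)

lemma sum_split_x (N : ℕ) (xv wv : ℕ → ℝ) (m : ℕ) (hm : m < N)
    (hord : ∀ i j, i < j → j < N → xv i < xv j) :
    (1 / 2) * ∑ k ∈ Finset.range N, wv k * Real.exp (-|xv m - xv k|)
      = Real.exp (-xv m) * PcR xv wv (m + 1) + Real.exp (xv m) * QcR N xv wv (m + 1) := by
  unfold PcR QcR
  have hsplit : ∑ k ∈ Finset.range N, wv k * Real.exp (-|xv m - xv k|)
      = (∑ k ∈ Finset.range (m + 1), wv k * Real.exp (-|xv m - xv k|))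
        + ∑ k ∈ Finset.Ico (m + 1) N, wv k * Real.exp (-|xv m - xv k|) := by
    rw [Finset.range_eq_Ico, ← Finset.sum_Ico_consecutive _ (Nat.zero_le (m + 1)) hm, ← Finset.range_eq_Ico]
  rw [hsplit]
  have h1 : ∑ k ∈ Finset.range (m + 1), wv k * Real.exp (-|xv m - xv k|)
      = ∑ k ∈ Finset.range (m + 1), Real.exp (-xv m) * (wv k * Real.exp (xv k)) := by
    refine Finset.sum_congr rfl fun k hk => ?_
    have hk' : k ≤ m := Nat.lt_succ_iff.mp (Finset.mem_range.mp hk)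
    have hle : xv k ≤ xv m := by
      rcases lt_or_eq_of_le hk' with h | h
      · exact (hord k m h hm).le
      · exact le_of_eq (by rw [h])
    rw [abs_of_nonneg (sub_nonneg.mpr hle), show -(xv m - xv k) = -xv m + xv k by ring,
      Real.exp_add]
    ring
  have h2 : ∑ k ∈ Finset.Ico (m + 1) N, wv k * Real.exp (-|xv m - xv k|)
      = ∑ k ∈ Finset.Ico (m + 1) N, Real.exp (xv m) * (wv k * Real.exp (-xv k)) := by
    refine Finset.sum_congr rfl fun k hk => ?_
    obtain ⟨hk1, hk2⟩ := Finset.mem_Ico.mp hk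
    have hlt : xv m < xv k := hord m k hk1 hk2
    rw [abs_of_neg (sub_neg.mpr hlt), neg_neg, show xv m - xv k = xv m + -xv k by ring,
      Real.exp_add]
    ring
  rw [h1, h2, ← Finset.mul_sum, ← Finset.mul_sum]
  ring

lemma sum_split_w (N : ℕ) (xv wv : ℕ → ℝ) (m : ℕ) (hm : m < N)
    (hord : ∀ i j, i < j → j < N → xv i < xv j) :
    (1 / 2) * ∑ k ∈ Finset.range N,
        wv m * wv k * Real.sign (xv m - xv k) * Real.exp (-|xv m - xv k|)
      = wv m * (Real.exp (-xv m) * PcR xv wv m - Real.exp (xv m) * QcR N xv wv (m + 1)) := by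
  unfold PcR QcR
  have hsplit : ∑ k ∈ Finset.range N,
        wv m * wv k * Real.sign (xv m - xv k) * Real.exp (-|xv m - xv k|)
      = (∑ k ∈ Finset.range m,
            wv m * wv k * Real.sign (xv m - xv k) * Real.exp (-|xv m - xv k|))
        + (wv m * wv m * Real.sign (xv m - xv m) * Real.exp (-|xv m - xv m|)
        + ∑ k ∈ Finset.Ico (m + 1) N,
            wv m * wv k * Real.sign (xv m - xv k) * Real.exp (-|xv m - xv k|)) := by
    rw [Finset.range_eq_Ico, ← Finset.sum_Ico_consecutive _ (Nat.zero_le m) hm.le,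
      Finset.sum_eq_sum_Ico_succ_bot hm, ← Finset.range_eq_Ico]
  rw [hsplit]
  have h1 : ∑ k ∈ Finset.range m,
        wv m * wv k * Real.sign (xv m - xv k) * Real.exp (-|xv m - xv k|)
      = ∑ k ∈ Finset.range m, (Real.exp (-xv m) * wv m) * (wv k * Real.exp (xv k)) := by
    refine Finset.sum_congr rfl fun k hk => ?_
    have hk' : k < m := Finset.mem_range.mp hk
    have hlt : xv k < xv m := hord k m hk' hm
    rw [Real.sign_of_pos (sub_pos.mpr hlt), abs_of_nonneg (sub_nonneg.mpr hlt.le),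
      show -(xv m - xv k) = -xv m + xv k by ring, Real.exp_add]
    ring
  have h2 : ∑ k ∈ Finset.Ico (m + 1) N,
        wv m * wv k * Real.sign (xv m - xv k) * Real.exp (-|xv m - xv k|)
      = ∑ k ∈ Finset.Ico (m + 1) N,
          -((Real.exp (xv m) * wv m) * (wv k * Real.exp (-xv k))) := by
    refine Finset.sum_congr rfl fun k hk => ?_
    obtain ⟨hk1, hk2⟩ := Finset.mem_Ico.mp hk
    have hlt : xv m < xv k := hord m k hk1 hk2
    rw [Real.sign_of_neg (sub_neg.mpr hlt), abs_of_neg (sub_neg.mpr hlt), neg_neg,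
      show xv m - xv k = xv m + -xv k by ring, Real.exp_add]
    ring
  rw [h1, h2, ← Finset.mul_sum, Finset.sum_neg_distrib, ← Finset.mul_sum, sub_self,
    Real.sign_zero]
  ring

lemma sum_split_xC (N : ℕ) (xv wv : ℕ → ℝ) (m : ℕ) (hm : m < N)
    (hord : ∀ i j, i < j → j < N → xv i < xv j) :
    ((((1 : ℝ) / 2) * ∑ k ∈ Finset.range N, wv k * Real.exp (-|xv m - xv k|) : ℝ) : ℂ)
      = Complex.exp (-(xv m : ℂ)) * ((PcR xv wv (m + 1) : ℝ) : ℂ)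
        + Complex.exp ((xv m : ℂ)) * ((QcR N xv wv (m + 1) : ℝ) : ℂ) := by
  rw [sum_split_x N xv wv m hm hord]
  push_cast
  ring

lemma sum_split_wC (N : ℕ) (xv wv : ℕ → ℝ) (m : ℕ) (hm : m < N)
    (hord : ∀ i j, i < j → j < N → xv i < xv j) :
    ((((1 : ℝ) / 2) * ∑ k ∈ Finset.range N,
        wv m * wv k * Real.sign (xv m - xv k) * Real.exp (-|xv m - xv k|) : ℝ) : ℂ)
      = (wv m : ℂ) * (Complex.exp (-(xv m : ℂ)) * ((PcR xv wv m : ℝ) : ℂ)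
        - Complex.exp ((xv m : ℂ)) * ((QcR N xv wv (m + 1) : ℝ) : ℂ)) := by
  rw [sum_split_w N xv wv m hm hord]
  push_cast
  ring

lemma PcR_succC (xv wv : ℕ → ℝ) (m : ℕ) :
    ((PcR xv wv (m + 1) : ℝ) : ℂ)
      = ((PcR xv wv m : ℝ) : ℂ) + 1 / 2 * (wv m : ℂ) * Complex.exp ((xv m : ℂ)) := by
  unfold PcR
  rw [Finset.sum_range_succ]
  push_cast
  ring

lemma QcR_succC (N : ℕ) (xv wv : ℕ → ℝ) (m : ℕ) (hm : m < N) :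
    ((QcR N xv wv m : ℝ) : ℂ)
      = ((QcR N xv wv (m + 1) : ℝ) : ℂ) + 1 / 2 * (wv m : ℂ) * Complex.exp (-(xv m : ℂ)) := by
  unfold QcR
  rw [Finset.sum_eq_sum_Ico_succ_bot hm]
  push_cast
  ring

/-- Pure algebra: evolution of the `a`-coefficient across one more peakon. -/
lemma step1 (a b d g z E F P P2 Q1 Q2 xd wd : ℂ)
    (hEF : E * F = 1) (hP : P2 = P + 1 / 2 * g * E) (hQ : Q1 = Q2 + 1 / 2 * g * F)
    (hxd : xd = F * P2 + E * Q2) (hwd : wd = g * (F * P - E * Q2))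
    (hcon : 2 * z * d = -(2 * z * P * a) + b) :
    Q1 * b - (z * wd * (a + b * F) + z * g * (Q1 * b + (d * F + b * (F * -xd))))
      = Q2 * (b + z * g * (a * E + b)) := by
  linear_combination (b * g * z * F) * hxd + (-(b * z * F) - a * z) * hwd
    + (b * g * z * F ^ 2) * hP + (b - b * g * z) * hQ + (-(g * F) / 2) * hcon
    + (2 * b * g * z * Q2 + 1 / 2 * b * g ^ 2 * z * F) * hEF

/-- Pure algebra: evolution of the `b`-coefficient across one more peakon. -/
lemma step2 (a b d g z E F P P2 Q1 Q2 xd wd : ℂ)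
    (hEF : E * F = 1) (hP : P2 = P + 1 / 2 * g * E) (hQ : Q1 = Q2 + 1 / 2 * g * F)
    (hxd : xd = F * P2 + E * Q2) (hwd : wd = g * (F * P - E * Q2))
    (hcon : 2 * z * d = -(2 * z * P * a) + b) :
    2 * z * (d + (z * wd * (a * E + b) + z * g * (Q1 * b * E + a * (E * xd) + d)))
      = -(2 * z * P2 * (a - z * g * (a + b * F))) + (b + z * g * (a * E + b)) := by
  linear_combination (2 * a * g * z ^ 2 * E) * hxd + (2 * b * z ^ 2 + 2 * a * z ^ 2 * E) * hwd
    + (-(2 * b * g * z ^ 2 * F) + 2 * a * z - 2 * a * g * z ^ 2 + 2 * a * g * z ^ 2 * E * F) * hP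
    + (2 * b * g * z ^ 2 * E) * hQ + (1 + g * z) * hcon
    + (4 * a * g * z ^ 2 * P + a * g ^ 2 * z ^ 2 * E) * hEF

lemma base1 (w0 E0 F0 P0 Q01 wd0 z : ℂ)
    (hwd0 : wd0 = w0 * (F0 * P0 - E0 * Q01)) (hP0 : P0 = 0) :
    -(z * wd0) = Q01 * (z * w0 * E0) := by
  linear_combination (-z) * hwd0 + (-(z * F0 * w0)) * hP0

lemma base2 (w0 E0 F0 P0 P1 Q01 wd0 xd0 z : ℂ)
    (hEF : E0 * F0 = 1) (hxd0 : xd0 = F0 * P1 + E0 * Q01)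
    (hwd0 : wd0 = w0 * (F0 * P0 - E0 * Q01)) (hP1 : P1 = P0 + 1 / 2 * w0 * E0)
    (hP0 : P0 = 0) :
    2 * z * (z * wd0 * E0 + z * w0 * (E0 * xd0)) = -(2 * z * P1 * (1 - z * w0)) + z * w0 * E0 := by
  linear_combination (2 * z ^ 2 * E0 * w0) * hxd0 + (2 * z ^ 2 * E0) * hwd0
    + (2 * z - 2 * z ^ 2 * w0 + 2 * z ^ 2 * E0 * F0 * w0) * hP1
    + (2 * z - 2 * z ^ 2 * w0 + 4 * z ^ 2 * E0 * F0 * w0) * hP0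
    + (z ^ 2 * E0 * w0 ^ 2) * hEF

/-- the multi-peakon flow is isospectral: along any solution of the
multi-peakon ODE system on an open interval `I`, the Wronskian polynomial of the
associated spectral problem (with `υ = 0`) is independent of time. -/
theorem stmt_16 (N : ℕ) (I : Set ℝ) (hIo : IsOpen I) (hIc : I.OrdConnected)
    (x w : ℕ → ℝ → ℝ)
    (hx : ∀ t ∈ I, ∀ i j, i < j → j < N → x i t < x j t)
    (hxd : ∀ t ∈ I, ∀ n, n < N → HasDerivAt (x n)
      ((1 / 2) * ∑ k ∈ Finset.range N, w k t * Real.exp (-|x n t - x k t|)) t)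
    (hwd : ∀ t ∈ I, ∀ n, n < N → HasDerivAt (w n)
      ((1 / 2) * ∑ k ∈ Finset.range N,
        w n t * w k t * Real.sign (x n t - x k t) * Real.exp (-|x n t - x k t|)) t)
    (hw : ∀ t ∈ I, ∀ n, n < N → w n t ≠ 0) :
    ∀ s ∈ I, ∀ t ∈ I, ∀ z : ℂ,
      Wron N (fun n => x n s) (fun n => w n s) (fun _ => 0) z
        = Wron N (fun n => x n t) (fun n => w n t) (fun _ => 0) z := by
  intro s hs t ht z
  rcases Nat.eq_zero_or_pos N with rfl | hNpos
  · simp [Wron]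
  have hN' : N ≠ 0 := hNpos.ne'
  rw [Wron_eq_abA N hN' (fun n => x n s) (fun n => w n s) z,
    Wron_eq_abA N hN' (fun n => x n t) (fun n => w n t) z]
  suffices H : ∀ u ∈ I, HasDerivAt
      (fun r => (abA (fun n => x n r) (fun n => w n r) z (N - 1)).1) 0 u by
    have hconv : Convex ℝ I := hIc.convex
    have hle := Convex.norm_image_sub_le_of_norm_hasDerivWithin_le
      (f := fun r => (abA (fun n => x n r) (fun n => w n r) z (N - 1)).1)
      (f' := fun _ => (0 : ℂ)) (C := 0)
      (fun u hu => (H u hu).hasDerivWithinAt) (fun u hu => by simp) hconv hs ht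
    have h0 : ‖(abA (fun n => x n t) (fun n => w n t) z (N - 1)).1
        - (abA (fun n => x n s) (fun n => w n s) z (N - 1)).1‖ ≤ 0 := by
      simpa using hle
    exact (sub_eq_zero.mp (norm_le_zero_iff.mp h0)).symm
  intro u hu
  have hord : ∀ i j, i < j → j < N → x i u < x j u := fun i j hij hj => hx u hu i j hij hj
  have main : ∀ m, m < N →
      HasDerivAt (fun r => (abA (fun n => x n r) (fun n => w n r) z m).1)
        (((QcR N (fun n => x n u) (fun n => w n u) (m + 1) : ℝ) : ℂ)
          * (abA (fun n => x n u) (fun n => w n u) z m).2) u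
      ∧ ∃ d : ℂ,
        HasDerivAt (fun r => (abA (fun n => x n r) (fun n => w n r) z m).2) d u ∧
        2 * z * d
          = -(2 * z * ((PcR (fun n => x n u) (fun n => w n u) (m + 1) : ℝ) : ℂ)
              * (abA (fun n => x n u) (fun n => w n u) z m).1)
            + (abA (fun n => x n u) (fun n => w n u) z m).2 := by
    intro m
    induction m with
    | zero =>
        intro h0
        obtain ⟨wD, hwD, hwDC⟩ :
            ∃ dd : ℝ, HasDerivAt (w 0) dd u ∧ ((dd : ℝ) : ℂ)
              = ((w 0 u : ℝ) : ℂ) * (Complex.exp (-(x 0 u : ℂ))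
                  * ((PcR (fun n => x n u) (fun n => w n u) 0 : ℝ) : ℂ)
                - Complex.exp ((x 0 u : ℂ))
                  * ((QcR N (fun n => x n u) (fun n => w n u) (0 + 1) : ℝ) : ℂ)) :=
          ⟨_, hwd u hu 0 h0, sum_split_wC N (fun n => x n u) (fun n => w n u) 0 h0 hord⟩
        obtain ⟨xD, hxD, hxDC⟩ :
            ∃ dd : ℝ, HasDerivAt (x 0) dd u ∧ ((dd : ℝ) : ℂ)
              = Complex.exp (-(x 0 u : ℂ))
                  * ((PcR (fun n => x n u) (fun n => w n u) (0 + 1) : ℝ) : ℂ)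
                + Complex.exp ((x 0 u : ℂ))
                  * ((QcR N (fun n => x n u) (fun n => w n u) (0 + 1) : ℝ) : ℂ) :=
          ⟨_, hxd u hu 0 h0, sum_split_xC N (fun n => x n u) (fun n => w n u) 0 h0 hord⟩
        have hP0 : ((PcR (fun n => x n u) (fun n => w n u) 0 : ℝ) : ℂ) = 0 := by
          simp [PcR]
        have hP1 : ((PcR (fun n => x n u) (fun n => w n u) (0 + 1) : ℝ) : ℂ)
            = ((PcR (fun n => x n u) (fun n => w n u) 0 : ℝ) : ℂ)
              + 1 / 2 * ((w 0 u : ℝ) : ℂ) * Complex.exp ((x 0 u : ℂ)) :=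
          PcR_succC (fun n => x n u) (fun n => w n u) 0
        have hEF : Complex.exp ((x 0 u : ℂ)) * Complex.exp (-(x 0 u : ℂ)) = 1 := by
          rw [← Complex.exp_add, show (x 0 u : ℂ) + -(x 0 u : ℂ) = 0 by ring, Complex.exp_zero]
        constructor
        · have hfun : (fun r => (abA (fun n => x n r) (fun n => w n r) z 0).1)
              = fun r => 1 - z * ((w 0 r : ℝ) : ℂ) := by
            funext r
            simp [abA]
          rw [hfun]
          have h : HasDerivAt (fun r => 1 - z * ((w 0 r : ℝ) : ℂ)) (-(z * (wD : ℂ))) u :=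
            (hwD.ofReal_comp.const_mul z).const_sub 1
          have hval : -(z * (wD : ℂ))
              = ((QcR N (fun n => x n u) (fun n => w n u) (0 + 1) : ℝ) : ℂ)
                * (abA (fun n => x n u) (fun n => w n u) z 0).2 := by
            simp only [abA]
            linear_combination base1 _ _ _ _ _ _ z hwDC hP0
          exact hval ▸ h
        · refine ⟨z * (wD : ℂ) * Complex.exp ((x 0 u : ℂ))
              + z * ((w 0 u : ℝ) : ℂ) * (Complex.exp ((x 0 u : ℂ)) * (xD : ℂ)), ?_, ?_⟩
          · have hfun : (fun r => (abA (fun n => x n r) (fun n => w n r) z 0).2)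
                = fun r => z * ((w 0 r : ℝ) : ℂ) * Complex.exp ((x 0 r : ℂ)) := by
              funext r
              simp [abA]
            rw [hfun]
            exact (hwD.ofReal_comp.const_mul z).mul (hxD.ofReal_comp.cexp)
          · simp only [abA]
            linear_combination base2 _ _ _ _ _ _ _ _ z hEF hxDC hwDC hP1 hP0
    | succ m ih =>
        intro hm1
        obtain ⟨hA, dB, hB, hcon⟩ := ih (Nat.lt_of_succ_lt hm1)
        obtain ⟨wD, hwD, hwDC⟩ :
            ∃ dd : ℝ, HasDerivAt (w (m + 1)) dd u ∧ ((dd : ℝ) : ℂ)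
              = ((w (m + 1) u : ℝ) : ℂ) * (Complex.exp (-(x (m + 1) u : ℂ))
                  * ((PcR (fun n => x n u) (fun n => w n u) (m + 1) : ℝ) : ℂ)
                - Complex.exp ((x (m + 1) u : ℂ))
                  * ((QcR N (fun n => x n u) (fun n => w n u) (m + 1 + 1) : ℝ) : ℂ)) :=
          ⟨_, hwd u hu (m + 1) hm1,
            sum_split_wC N (fun n => x n u) (fun n => w n u) (m + 1) hm1 hord⟩
        obtain ⟨xD, hxD, hxDC⟩ :
            ∃ dd : ℝ, HasDerivAt (x (m + 1)) dd u ∧ ((dd : ℝ) : ℂ)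
              = Complex.exp (-(x (m + 1) u : ℂ))
                  * ((PcR (fun n => x n u) (fun n => w n u) (m + 1 + 1) : ℝ) : ℂ)
                + Complex.exp ((x (m + 1) u : ℂ))
                  * ((QcR N (fun n => x n u) (fun n => w n u) (m + 1 + 1) : ℝ) : ℂ) :=
          ⟨_, hxd u hu (m + 1) hm1,
            sum_split_xC N (fun n => x n u) (fun n => w n u) (m + 1) hm1 hord⟩
        have hP : ((PcR (fun n => x n u) (fun n => w n u) (m + 1 + 1) : ℝ) : ℂ)
            = ((PcR (fun n => x n u) (fun n => w n u) (m + 1) : ℝ) : ℂ)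
              + 1 / 2 * ((w (m + 1) u : ℝ) : ℂ) * Complex.exp ((x (m + 1) u : ℂ)) :=
          PcR_succC (fun n => x n u) (fun n => w n u) (m + 1)
        have hQ : ((QcR N (fun n => x n u) (fun n => w n u) (m + 1) : ℝ) : ℂ)
            = ((QcR N (fun n => x n u) (fun n => w n u) (m + 1 + 1) : ℝ) : ℂ)
              + 1 / 2 * ((w (m + 1) u : ℝ) : ℂ) * Complex.exp (-(x (m + 1) u : ℂ)) :=
          QcR_succC N (fun n => x n u) (fun n => w n u) (m + 1) hm1
        have hEF : Complex.exp ((x (m + 1) u : ℂ)) * Complex.exp (-(x (m + 1) u : ℂ)) = 1 := by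
          rw [← Complex.exp_add, show (x (m + 1) u : ℂ) + -(x (m + 1) u : ℂ) = 0 by ring,
            Complex.exp_zero]
        constructor
        · have hfun : (fun r => (abA (fun n => x n r) (fun n => w n r) z (m + 1)).1)
              = fun r => (abA (fun n => x n r) (fun n => w n r) z m).1
                - z * ((w (m + 1) r : ℝ) : ℂ)
                  * ((abA (fun n => x n r) (fun n => w n r) z m).1
                    + (abA (fun n => x n r) (fun n => w n r) z m).2
                      * Complex.exp (-(x (m + 1) r : ℂ))) := by
            funext r
            simp [abA]
          rw [hfun]
          have h : HasDerivAt
              (fun r => (abA (fun n => x n r) (fun n => w n r) z m).1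
                - z * ((w (m + 1) r : ℝ) : ℂ)
                  * ((abA (fun n => x n r) (fun n => w n r) z m).1
                    + (abA (fun n => x n r) (fun n => w n r) z m).2
                      * Complex.exp (-(x (m + 1) r : ℂ))))
              (((QcR N (fun n => x n u) (fun n => w n u) (m + 1) : ℝ) : ℂ)
                  * (abA (fun n => x n u) (fun n => w n u) z m).2
                - (z * (wD : ℂ)
                    * ((abA (fun n => x n u) (fun n => w n u) z m).1
                      + (abA (fun n => x n u) (fun n => w n u) z m).2
                        * Complex.exp (-(x (m + 1) u : ℂ)))
                  + z * ((w (m + 1) u : ℝ) : ℂ)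
                    * (((QcR N (fun n => x n u) (fun n => w n u) (m + 1) : ℝ) : ℂ)
                        * (abA (fun n => x n u) (fun n => w n u) z m).2
                      + (dB * Complex.exp (-(x (m + 1) u : ℂ))
                        + (abA (fun n => x n u) (fun n => w n u) z m).2
                          * (Complex.exp (-(x (m + 1) u : ℂ)) * -(xD : ℂ)))))) u :=
            hA.sub ((hwD.ofReal_comp.const_mul z).mul
              (hA.add (hB.mul (hxD.ofReal_comp.neg.cexp))))
          have hval : (((QcR N (fun n => x n u) (fun n => w n u) (m + 1) : ℝ) : ℂ)
                  * (abA (fun n => x n u) (fun n => w n u) z m).2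
                - (z * (wD : ℂ)
                    * ((abA (fun n => x n u) (fun n => w n u) z m).1
                      + (abA (fun n => x n u) (fun n => w n u) z m).2
                        * Complex.exp (-(x (m + 1) u : ℂ)))
                  + z * ((w (m + 1) u : ℝ) : ℂ)
                    * (((QcR N (fun n => x n u) (fun n => w n u) (m + 1) : ℝ) : ℂ)
                        * (abA (fun n => x n u) (fun n => w n u) z m).2
                      + (dB * Complex.exp (-(x (m + 1) u : ℂ))
                        + (abA (fun n => x n u) (fun n => w n u) z m).2
                          * (Complex.exp (-(x (m + 1) u : ℂ)) * -(xD : ℂ))))))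
              = ((QcR N (fun n => x n u) (fun n => w n u) (m + 1 + 1) : ℝ) : ℂ)
                * (abA (fun n => x n u) (fun n => w n u) z (m + 1)).2 := by
            simp only [abA]
            linear_combination step1 _ _ _ _ _ _ _ _ _ _ _ _ _ hEF hP hQ hxDC hwDC hcon
          exact hval ▸ h
        · refine ⟨dB + (z * (wD : ℂ)
              * ((abA (fun n => x n u) (fun n => w n u) z m).1 * Complex.exp ((x (m + 1) u : ℂ))
                + (abA (fun n => x n u) (fun n => w n u) z m).2)
              + z * ((w (m + 1) u : ℝ) : ℂ)
                * ((((QcR N (fun n => x n u) (fun n => w n u) (m + 1) : ℝ) : ℂ)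
                      * (abA (fun n => x n u) (fun n => w n u) z m).2
                      * Complex.exp ((x (m + 1) u : ℂ))
                    + (abA (fun n => x n u) (fun n => w n u) z m).1
                      * (Complex.exp ((x (m + 1) u : ℂ)) * (xD : ℂ)))
                  + dB)), ?_, ?_⟩
          · have hfun : (fun r => (abA (fun n => x n r) (fun n => w n r) z (m + 1)).2)
                = fun r => (abA (fun n => x n r) (fun n => w n r) z m).2
                  + z * ((w (m + 1) r : ℝ) : ℂ)
                    * ((abA (fun n => x n r) (fun n => w n r) z m).1
                        * Complex.exp ((x (m + 1) r : ℂ))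
                      + (abA (fun n => x n r) (fun n => w n r) z m).2) := by
              funext r
              simp [abA]
            rw [hfun]
            exact hB.add ((hwD.ofReal_comp.const_mul z).mul
              ((hA.mul (hxD.ofReal_comp.cexp)).add hB))
          · simp only [abA]
            linear_combination step2 _ _ _ _ _ _ _ _ _ _ _ _ _ hEF hP hQ hxDC hwDC hcon
  obtain ⟨hA, -⟩ := main (N - 1) (Nat.sub_lt hNpos Nat.one_pos)
  have hQN : QcR N (fun n => x n u) (fun n => w n u) (N - 1 + 1) = 0 := by
    rw [Nat.sub_add_cancel (Nat.one_le_iff_ne_zero.mpr hN')]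
    simp [QcR]
  rw [hQN] at hA
  simpa using hA
end

section
/- Let I ⊆ ℝ be an open interval and let x_n, ω_n : I → ℝ (n = 1,…,N) be differentiable with x_1(t) < ⋯ < x_N(t) for all t ∈ I, satisfying the multi-peakon system x_n′ = (1/2) Σ_k ω_k e^{−|x_n−x_k|}, ω_n′ = (1/2) Σ_k ω_n ω_k sgn(x_n−x_k) e^{−|x_n−x_k|} (with sgn(0)=0). Then the two quantities I₁(t) = Σ_{n=1}^N ω_n(t) and I₂(t) = (1/2) Σ_{n=1}^N Σ_{k=1}^N ω_n(t) ω_k(t) e^{−|x_n(t)−x_k(t)|} are constant on I. -/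
open scoped BigOperators

private lemma hasDerivAt_abs_real {a : ℝ} (ha : a ≠ 0) :
    HasDerivAt (fun y : ℝ => |y|) (Real.sign a) a := by
  rcases ha.lt_or_gt with h | h
  · simpa [Real.sign_of_neg h] using hasDerivAt_abs_neg h
  · simpa [Real.sign_of_pos h] using hasDerivAt_abs_pos h

private lemma sum3_swap13 (s : Finset ℕ) (f : ℕ → ℕ → ℕ → ℝ) :
    (∑ n ∈ s, ∑ k ∈ s, ∑ j ∈ s, f n k j) = ∑ n ∈ s, ∑ k ∈ s, ∑ j ∈ s, f j k n :=
  calc (∑ n ∈ s, ∑ k ∈ s, ∑ j ∈ s, f n k j)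
      = ∑ k ∈ s, ∑ n ∈ s, ∑ j ∈ s, f n k j := Finset.sum_comm
    _ = ∑ k ∈ s, ∑ j ∈ s, ∑ n ∈ s, f n k j :=
        Finset.sum_congr rfl fun _ _ => Finset.sum_comm
    _ = ∑ j ∈ s, ∑ k ∈ s, ∑ n ∈ s, f n k j := Finset.sum_comm

private lemma const_on_of_deriv0 {I : Set ℝ} (hIo : IsOpen I) (hIc : I.OrdConnected)
    {f : ℝ → ℝ} (h : ∀ τ ∈ I, HasDerivAt f 0 τ) {s t : ℝ} (hs : s ∈ I) (ht : t ∈ I) :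
    f s = f t := by
  have hconv : Convex ℝ I := convex_iff_ordConnected.mpr hIc
  refine hconv.is_const_of_fderivWithin_eq_zero
    (fun τ hτ => ((h τ hτ).differentiableAt).differentiableWithinAt)
    (fun τ hτ => ?_) hs ht
  rw [fderivWithin_of_isOpen hIo hτ]
  have h0 : HasFDerivAt f (0 : ℝ →L[ℝ] ℝ) τ := by
    have h1 := (h τ hτ).hasFDerivAt
    rw [ContinuousLinearMap.toSpanSingleton_zero] at h1
    exact h1
  exact h0.fderiv

private lemma alg1 (N : ℕ) (W X : ℕ → ℝ) :
    (∑ n ∈ Finset.range N, (1 / 2) * ∑ k ∈ Finset.range N,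
      W n * W k * Real.sign (X n - X k) * Real.exp (-|X n - X k|)) = 0 := by
  set f : ℕ → ℕ → ℝ := fun n k =>
    W n * W k * Real.sign (X n - X k) * Real.exp (-|X n - X k|) with hf
  have h1 : (∑ n ∈ Finset.range N, (1 / 2) * ∑ k ∈ Finset.range N, f n k)
      = (1 / 2) * ∑ n ∈ Finset.range N, ∑ k ∈ Finset.range N, f n k := by
    rw [Finset.mul_sum]
  have h2 : (∑ n ∈ Finset.range N, ∑ k ∈ Finset.range N, f n k)
      = -∑ n ∈ Finset.range N, ∑ k ∈ Finset.range N, f n k := by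
    calc (∑ n ∈ Finset.range N, ∑ k ∈ Finset.range N, f n k)
        = ∑ k ∈ Finset.range N, ∑ n ∈ Finset.range N, f n k := Finset.sum_comm
      _ = ∑ n ∈ Finset.range N, ∑ k ∈ Finset.range N, (- f n k) := by
          refine Finset.sum_congr rfl fun n _ => Finset.sum_congr rfl fun k _ => ?_
          simp only [hf]
          rw [show X k - X n = -(X n - X k) by ring, Real.sign_neg, abs_neg]
          ring
      _ = -∑ n ∈ Finset.range N, ∑ k ∈ Finset.range N, f n k := by
          simp [Finset.sum_neg_distrib]
  have h3 : (∑ n ∈ Finset.range N, ∑ k ∈ Finset.range N, f n k) = 0 := by linarith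
  rw [h1, h3, mul_zero]

private lemma alg2 (N : ℕ) (W X : ℕ → ℝ) :
    (∑ n ∈ Finset.range N, (∑ k ∈ Finset.range N,
      ((((1 / 2) * ∑ j ∈ Finset.range N,
          W n * W j * Real.sign (X n - X j) * Real.exp (-|X n - X j|)) * W k
        + W n * ((1 / 2) * ∑ j ∈ Finset.range N,
          W k * W j * Real.sign (X k - X j) * Real.exp (-|X k - X j|)))
        * Real.exp (-|X n - X k|)
      + W n * W k *
        (-(Real.sign (X n - X k) *
            (((1 / 2) * ∑ j ∈ Finset.range N, W j * Real.exp (-|X n - X j|))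
              - (1 / 2) * ∑ j ∈ Finset.range N, W j * Real.exp (-|X k - X j|)))
          * Real.exp (-|X n - X k|))))) = 0 := by
  set S : ℕ → ℕ → ℝ := fun n k => Real.sign (X n - X k) with hS
  set E : ℕ → ℕ → ℝ := fun n k => Real.exp (-|X n - X k|) with hE
  have hSanti : ∀ n k, S k n = -S n k := by
    intro n k
    simp only [hS]
    rw [show X k - X n = -(X n - X k) by ring, Real.sign_neg]
  have hEsymm : ∀ n k, E k n = E n k := by
    intro n k
    simp only [hE, abs_sub_comm]
  -- expand into a triple sum
  have step1 : (∑ n ∈ Finset.range N, (∑ k ∈ Finset.range N,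
      ((((1 / 2) * ∑ j ∈ Finset.range N, W n * W j * S n j * E n j) * W k
        + W n * ((1 / 2) * ∑ j ∈ Finset.range N, W k * W j * S k j * E k j)) * E n k
      + W n * W k *
        (-(S n k * (((1 / 2) * ∑ j ∈ Finset.range N, W j * E n j)
              - (1 / 2) * ∑ j ∈ Finset.range N, W j * E k j)) * E n k))))
      = ∑ n ∈ Finset.range N, (∑ k ∈ Finset.range N, (∑ j ∈ Finset.range N,
        ((((1 / 2) * (W n * W k * W j) * (S n j * E n j * E n k)
          + (1 / 2) * (W n * W k * W j) * (S k j * E k j * E n k))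
          - (1 / 2) * (W n * W k * W j) * (S n k * E n j * E n k))
          + (1 / 2) * (W n * W k * W j) * (S n k * E k j * E n k)))) := by
    refine Finset.sum_congr rfl fun n _ => Finset.sum_congr rfl fun k _ => ?_
    calc (((1 / 2) * ∑ j ∈ Finset.range N, W n * W j * S n j * E n j) * W k
        + W n * ((1 / 2) * ∑ j ∈ Finset.range N, W k * W j * S k j * E k j)) * E n k
      + W n * W k *
        (-(S n k * (((1 / 2) * ∑ j ∈ Finset.range N, W j * E n j)
              - (1 / 2) * ∑ j ∈ Finset.range N, W j * E k j)) * E n k)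
        = (E n k * W k * (1 / 2)) * (∑ j ∈ Finset.range N, W n * W j * S n j * E n j)
          + ((E n k * W n * (1 / 2)) * (∑ j ∈ Finset.range N, W k * W j * S k j * E k j)
          + ((-(W n * W k * S n k * E n k * (1 / 2)))
              * (∑ j ∈ Finset.range N, W j * E n j)
            + (W n * W k * S n k * E n k * (1 / 2))
              * (∑ j ∈ Finset.range N, W j * E k j))) := by ring
      _ = _ := by
          rw [Finset.mul_sum, Finset.mul_sum, Finset.mul_sum, Finset.mul_sum,
            ← Finset.sum_add_distrib, ← Finset.sum_add_distrib, ← Finset.sum_add_distrib]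
          exact Finset.sum_congr rfl fun j _ => by ring
  rw [step1]
  have split : (∑ n ∈ Finset.range N, (∑ k ∈ Finset.range N, (∑ j ∈ Finset.range N,
        ((((1 / 2) * (W n * W k * W j) * (S n j * E n j * E n k)
          + (1 / 2) * (W n * W k * W j) * (S k j * E k j * E n k))
          - (1 / 2) * (W n * W k * W j) * (S n k * E n j * E n k))
          + (1 / 2) * (W n * W k * W j) * (S n k * E k j * E n k)))))
      = (((∑ n ∈ Finset.range N, ∑ k ∈ Finset.range N, ∑ j ∈ Finset.range N,
          (1 / 2) * (W n * W k * W j) * (S n j * E n j * E n k))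
        + (∑ n ∈ Finset.range N, ∑ k ∈ Finset.range N, ∑ j ∈ Finset.range N,
          (1 / 2) * (W n * W k * W j) * (S k j * E k j * E n k)))
        - (∑ n ∈ Finset.range N, ∑ k ∈ Finset.range N, ∑ j ∈ Finset.range N,
          (1 / 2) * (W n * W k * W j) * (S n k * E n j * E n k)))
        + (∑ n ∈ Finset.range N, ∑ k ∈ Finset.range N, ∑ j ∈ Finset.range N,
          (1 / 2) * (W n * W k * W j) * (S n k * E k j * E n k)) := by
    simp only [Finset.sum_add_distrib, Finset.sum_sub_distrib]
  rw [split]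
  have h13 : (∑ n ∈ Finset.range N, ∑ k ∈ Finset.range N, ∑ j ∈ Finset.range N,
        (1 / 2) * (W n * W k * W j) * (S n j * E n j * E n k))
      = ∑ n ∈ Finset.range N, ∑ k ∈ Finset.range N, ∑ j ∈ Finset.range N,
        (1 / 2) * (W n * W k * W j) * (S n k * E n j * E n k) :=
    calc (∑ n ∈ Finset.range N, ∑ k ∈ Finset.range N, ∑ j ∈ Finset.range N,
        (1 / 2) * (W n * W k * W j) * (S n j * E n j * E n k))
        = ∑ n ∈ Finset.range N, ∑ k ∈ Finset.range N, ∑ j ∈ Finset.range N,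
          (1 / 2) * (W n * W j * W k) * (S n k * E n k * E n j) :=
            Finset.sum_congr rfl fun n _ => Finset.sum_comm
      _ = _ := Finset.sum_congr rfl fun n _ => Finset.sum_congr rfl fun k _ =>
            Finset.sum_congr rfl fun j _ => by ring
  have h24 : (∑ n ∈ Finset.range N, ∑ k ∈ Finset.range N, ∑ j ∈ Finset.range N,
        (1 / 2) * (W n * W k * W j) * (S n k * E k j * E n k))
      = -∑ n ∈ Finset.range N, ∑ k ∈ Finset.range N, ∑ j ∈ Finset.range N,
        (1 / 2) * (W n * W k * W j) * (S k j * E k j * E n k) :=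
    calc (∑ n ∈ Finset.range N, ∑ k ∈ Finset.range N, ∑ j ∈ Finset.range N,
        (1 / 2) * (W n * W k * W j) * (S n k * E k j * E n k))
        = ∑ n ∈ Finset.range N, ∑ k ∈ Finset.range N, ∑ j ∈ Finset.range N,
          (1 / 2) * (W j * W k * W n) * (S j k * E k n * E j k) :=
            sum3_swap13 _ _
      _ = ∑ n ∈ Finset.range N, ∑ k ∈ Finset.range N, ∑ j ∈ Finset.range N,
          (-((1 / 2) * (W n * W k * W j) * (S k j * E k j * E n k))) := by
            refine Finset.sum_congr rfl fun n _ => Finset.sum_congr rfl fun k _ =>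
              Finset.sum_congr rfl fun j _ => ?_
            rw [hSanti k j, hEsymm n k, hEsymm k j]
            ring
      _ = _ := by simp [Finset.sum_neg_distrib]
  rw [h13, h24]
  ring

/-- the quantities `I₁ = Σ_n ω_n` and
`I₂ = (1/2) Σ_n Σ_k ω_n ω_k e^{-|x_n - x_k|}` are conserved along the multi-peakon flow. -/
theorem stmt_18 (N : ℕ) (I : Set ℝ) (hIo : IsOpen I) (hIc : I.OrdConnected)
    (x w : ℕ → ℝ → ℝ)
    (hx : ∀ t ∈ I, ∀ i j, i < j → j < N → x i t < x j t)
    (hxd : ∀ t ∈ I, ∀ n, n < N → HasDerivAt (x n)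
      ((1 / 2) * ∑ k ∈ Finset.range N, w k t * Real.exp (-|x n t - x k t|)) t)
    (hwd : ∀ t ∈ I, ∀ n, n < N → HasDerivAt (w n)
      ((1 / 2) * ∑ k ∈ Finset.range N,
        w n t * w k t * Real.sign (x n t - x k t) * Real.exp (-|x n t - x k t|)) t) :
    ∀ s ∈ I, ∀ t ∈ I,
      (∑ n ∈ Finset.range N, w n s) = (∑ n ∈ Finset.range N, w n t) ∧
      (1 / 2) * ∑ n ∈ Finset.range N, ∑ k ∈ Finset.range N,
          w n s * w k s * Real.exp (-|x n s - x k s|)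
        = (1 / 2) * ∑ n ∈ Finset.range N, ∑ k ∈ Finset.range N,
            w n t * w k t * Real.exp (-|x n t - x k t|) := by
  have hne : ∀ τ ∈ I, ∀ n k, n < N → k < N → n ≠ k → x n τ - x k τ ≠ 0 := by
    intro τ hτ n k hn hk hnk
    rcases lt_or_gt_of_ne hnk with h | h
    · exact sub_ne_zero.mpr (hx τ hτ n k h hk).ne
    · exact sub_ne_zero.mpr (hx τ hτ k n h hn).ne'
  have key1 : ∀ τ ∈ I, HasDerivAt (fun σ => ∑ n ∈ Finset.range N, w n σ) 0 τ := by
    intro τ hτ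
    have h := HasDerivAt.sum (u := Finset.range N) (x := τ)
      (fun n hn => hwd τ hτ n (Finset.mem_range.mp hn))
    exact (h.congr_deriv (alg1 N (fun n => w n τ) (fun n => x n τ))).congr_of_eventuallyEq
      (Filter.Eventually.of_forall fun σ => by simp [Finset.sum_apply])
  have key2 : ∀ τ ∈ I, HasDerivAt (fun σ => ∑ n ∈ Finset.range N, ∑ k ∈ Finset.range N,
      w n σ * w k σ * Real.exp (-|x n σ - x k σ|)) 0 τ := by
    intro τ hτ
    have hE : ∀ n k, n < N → k < N →
        HasDerivAt (fun σ => Real.exp (-|x n σ - x k σ|))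
          (-(Real.sign (x n τ - x k τ) *
              (((1 / 2) * ∑ j ∈ Finset.range N, w j τ * Real.exp (-|x n τ - x j τ|))
                - (1 / 2) * ∑ j ∈ Finset.range N, w j τ * Real.exp (-|x k τ - x j τ|)))
            * Real.exp (-|x n τ - x k τ|)) τ := by
      intro n k hn hk
      by_cases hnk : n = k
      · subst hnk
        have hfun : (fun σ => Real.exp (-|x n σ - x n σ|)) = fun _ => (1 : ℝ) := by
          funext σ; simp
        rw [hfun]
        refine (hasDerivAt_const τ (1 : ℝ)).congr_deriv ?_
        simp
      · have hu : HasDerivAt (fun σ => x n σ - x k σ)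
            (((1 / 2) * ∑ j ∈ Finset.range N, w j τ * Real.exp (-|x n τ - x j τ|))
              - (1 / 2) * ∑ j ∈ Finset.range N, w j τ * Real.exp (-|x k τ - x j τ|)) τ :=
          (hxd τ hτ n hn).sub (hxd τ hτ k hk)
        have h0 := hne τ hτ n k hn hk hnk
        have habs : HasDerivAt (fun σ => |x n σ - x k σ|)
            (Real.sign (x n τ - x k τ) *
              (((1 / 2) * ∑ j ∈ Finset.range N, w j τ * Real.exp (-|x n τ - x j τ|))
                - (1 / 2) * ∑ j ∈ Finset.range N, w j τ * Real.exp (-|x k τ - x j τ|))) τ :=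
          by have := (hasDerivAt_abs_real h0).comp τ hu; exact this
        have hexp := habs.neg.exp
        refine hexp.congr_deriv ?_
        simp only [Pi.neg_apply]
        ring
    have h := HasDerivAt.sum (u := Finset.range N) (x := τ)
      (fun n hn => HasDerivAt.sum (u := Finset.range N) (x := τ)
        (fun k hk =>
          ((hwd τ hτ n (Finset.mem_range.mp hn)).mul
            (hwd τ hτ k (Finset.mem_range.mp hk))).mul
              (hE n k (Finset.mem_range.mp hn) (Finset.mem_range.mp hk))))
    exact (h.congr_deriv (alg2 N (fun n => w n τ) (fun n => x n τ))).congr_of_eventuallyEq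
      (Filter.Eventually.of_forall fun σ => by simp [Finset.sum_apply, Pi.mul_apply])
  intro s hs t ht
  refine ⟨const_on_of_deriv0 hIo hIc key1 hs ht, ?_⟩
  have h2 := const_on_of_deriv0 hIo hIc key2 hs ht
  rw [h2]
end
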